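/- arXiv:1603.06361 — 7 statements merged into one kernel-verified Lean document; each statement's English description precedes it below -/
import Mathlib

section
/- Let X ⊆ Y and A be finite-dimensional real Banach spaces, Z a Banach space, e : X → A an isometric embedding, T : Y → Z a linear operator with ‖T‖ ≤ r for some r > 1, and π : A → Z a nonexpansive linear operator such that π ∘ e = T ↾ X. Then there exist a finite-dimensional Banach space C, an isometric embedding i_A : A → C, an (r−1)-isometric embedding i_Y : Y → C, and a nonexpansive linear operator π' : C → Z such that i_A ∘ e = i_Y ↾ X, π' ∘ i_A = π, and π' ∘ i_Y = T. -/
set_option maxHeartbeats 1000000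

/-- A bundled finite-dimensional real Banach space. -/
structure FinDimBanach where
  carrier : Type
  [nacg : NormedAddCommGroup carrier]
  [nsp : NormedSpace ℝ carrier]
  [fd : FiniteDimensional ℝ carrier]

attribute [instance] FinDimBanach.nacg FinDimBanach.nsp FinDimBanach.fd

instance : CoeSort FinDimBanach Type := ⟨FinDimBanach.carrier⟩

/-- A `Type 0` copy of a finite-dimensional real normed space. -/
def NormCopy (Q : Type*) [NormedAddCommGroup Q] [NormedSpace ℝ Q] : Type :=
  Fin (Module.finrank ℝ Q) → ℝ

section
variable (Q : Type*) [NormedAddCommGroup Q] [NormedSpace ℝ Q] [FiniteDimensional ℝ Q]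

noncomputable instance : AddCommGroup (NormCopy Q) :=
  inferInstanceAs (AddCommGroup (Fin (Module.finrank ℝ Q) → ℝ))
noncomputable instance : Module ℝ (NormCopy Q) :=
  inferInstanceAs (Module ℝ (Fin (Module.finrank ℝ Q) → ℝ))

noncomputable def copyEquiv : Q ≃ₗ[ℝ] NormCopy Q := (Module.finBasis ℝ Q).equivFun

noncomputable instance : NormedAddCommGroup (NormCopy Q) :=
  NormedAddCommGroup.induced _ Q (copyEquiv Q).symm.toLinearMap (copyEquiv Q).symm.injective

noncomputable instance : NormedSpace ℝ (NormCopy Q) :=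
  NormedSpace.induced ℝ _ Q (copyEquiv Q).symm.toLinearMap

instance : FiniteDimensional ℝ (NormCopy Q) := Module.Finite.equiv (copyEquiv Q)

lemma normCopy_norm (v : NormCopy Q) : ‖v‖ = ‖(copyEquiv Q).symm v‖ := rfl
end

theorem quot_norm_lower {M : Type*} [SeminormedAddCommGroup M] {R : Type*} [Ring R] [Module R M]
    (S : Submodule R M) (x : M ⧸ S) {c : ℝ}
    (h : ∀ m : M, Submodule.Quotient.mk m = x → c ≤ ‖m‖) : c ≤ ‖x‖ :=
  le_of_forall_pos_le_add fun ε hε => by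
    obtain ⟨m, hm, hlt⟩ := Submodule.Quotient.norm_mk_lt x hε
    exact (h m hm).trans hlt.le

/-- Let `X ⊆ Y` and `A` be finite-dimensional Banach spaces, `Z` a Banach space,
`e : X → A` an isometric embedding, `T : Y → Z` linear with `‖T‖ ≤ r` for some `r > 1`, and
`π : A → Z` nonexpansive with `π ∘ e = T ↾ X`.  Then there exist a finite-dimensional Banach
space `C`, an isometric embedding `i_A : A → C`, an `(r-1)`-isometric embedding `i_Y : Y → C`
and a nonexpansive operator `π' : C → Z` with `i_A ∘ e = i_Y ↾ X`, `π' ∘ i_A = π` and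
`π' ∘ i_Y = T`. -/
theorem pushout_lemma
    (Y : Type*) [NormedAddCommGroup Y] [NormedSpace ℝ Y] [FiniteDimensional ℝ Y]
    (X : Submodule ℝ Y)
    (A : Type*) [NormedAddCommGroup A] [NormedSpace ℝ A] [FiniteDimensional ℝ A]
    (Z : Type*) [NormedAddCommGroup Z] [NormedSpace ℝ Z] [CompleteSpace Z]
    (e : X →ₗ[ℝ] A) (he : ∀ x : X, ‖e x‖ = ‖x‖)
    (r : ℝ) (hr : 1 < r)
    (T : Y →L[ℝ] Z) (hT : ‖T‖ ≤ r)
    (π : A →L[ℝ] Z) (hπ : ‖π‖ ≤ 1)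
    (hcomm : ∀ x : X, π (e x) = T (x : Y)) :
    ∃ (C : FinDimBanach) (iA : A →ₗ[ℝ] C) (iY : Y →ₗ[ℝ] C) (π' : C →L[ℝ] Z),
      (∀ a : A, ‖iA a‖ = ‖a‖) ∧
      (∀ y : Y, (1 + (r - 1))⁻¹ * ‖y‖ ≤ ‖iY y‖ ∧ ‖iY y‖ ≤ (1 + (r - 1)) * ‖y‖) ∧
      ‖π'‖ ≤ 1 ∧
      (∀ x : X, iA (e x) = iY (x : Y)) ∧
      (∀ a : A, π' (iA a) = π a) ∧
      (∀ y : Y, π' (iY y) = T y) := by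
  have hr0 : (0:ℝ) < r := lt_trans zero_lt_one hr
  have hr1 : (1:ℝ) ≤ r := hr.le
  haveI : FiniteDimensional ℝ (WithLp 1 (A × Y)) :=
    (WithLp.linearEquiv 1 ℝ (A × Y)).symm.finiteDimensional
  set W := WithLp 1 (A × Y) with hWdef
  have norm1 : ∀ w : W, ‖w‖ = ‖w.fst‖ + ‖w.snd‖ := by
    intro w
    rw [WithLp.prod_norm_eq_add (by norm_num)]
    norm_num
  let jA : A →ₗ[ℝ] W :=
    (WithLp.linearEquiv 1 ℝ (A × Y)).symm.toLinearMap ∘ₗ LinearMap.inl ℝ A Y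
  let jY : Y →ₗ[ℝ] W :=
    (WithLp.linearEquiv 1 ℝ (A × Y)).symm.toLinearMap ∘ₗ LinearMap.inr ℝ A Y
  have jA_fst : ∀ a : A, (jA a).fst = a := fun _ => rfl
  have jA_snd : ∀ a : A, (jA a).snd = 0 := fun _ => rfl
  have jY_fst : ∀ y : Y, (jY y).fst = 0 := fun _ => rfl
  have jY_snd : ∀ y : Y, (jY y).snd = y := fun _ => rfl
  let g : X →ₗ[ℝ] W := jA ∘ₗ e - r • (jY ∘ₗ X.subtype)
  have g_apply : ∀ x : X, g x = jA (e x) - r • jY (x : Y) := fun x => rfl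
  let L : Submodule ℝ W := LinearMap.range g
  haveI : IsClosed (L : Set W) := Submodule.closed_of_finiteDimensional L
  -- quotient
  let iA : A →ₗ[ℝ] (W ⧸ L) := L.mkQ ∘ₗ jA
  let iY : Y →ₗ[ℝ] (W ⧸ L) := r • (L.mkQ ∘ₗ jY)
  have iY_apply : ∀ y : Y, iY y = Submodule.Quotient.mk (r • jY y) := by
    intro y
    show r • (Submodule.Quotient.mk (jY y) : W ⧸ L) = _
    exact (Submodule.Quotient.mk_smul L r (jY y)).symm
  have hcommQ : ∀ x : X, iA (e x) = iY (x : Y) := by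
    intro x
    rw [iY_apply]
    show Submodule.Quotient.mk (jA (e x)) = _
    rw [Submodule.Quotient.eq]
    exact ⟨x, (g_apply x).symm⟩
  -- norm of iA
  have normA : ∀ a : A, ‖iA a‖ = ‖a‖ := by
    intro a
    refine le_antisymm ?_ ?_
    · calc ‖iA a‖ ≤ ‖jA a‖ := Submodule.Quotient.norm_mk_le L (jA a)
        _ = ‖a‖ := by rw [norm1, jA_fst, jA_snd, norm_zero, add_zero]
    · refine quot_norm_lower L _ fun m hm => ?_
      have hm' : (Submodule.Quotient.mk m : W ⧸ L) = Submodule.Quotient.mk (jA a) := hm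
      rw [Submodule.Quotient.eq] at hm'
      obtain ⟨x, hx⟩ := hm'
      have : m = jA (a + e x) - r • jY (x : Y) := by
        rw [map_add]
        have := g_apply x
        rw [this] at hx
        linear_combination (norm := module) -hx
      rw [this, norm1]
      have hfst : (jA (a + e x) - r • jY (x:Y)).fst = a + e x := by
        rw [WithLp.sub_fst, WithLp.smul_fst, jA_fst, jY_fst, smul_zero, sub_zero]
      have hsnd : (jA (a + e x) - r • jY (x:Y)).snd = -(r • (x:Y)) := by
        rw [WithLp.sub_snd, WithLp.smul_snd, jA_snd, jY_snd, zero_sub]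
      rw [hfst, hsnd, norm_neg, norm_smul, Real.norm_of_nonneg hr0.le]
      have h1 : ‖a‖ ≤ ‖a + e x‖ + ‖e x‖ := by
        simpa using norm_add_le (a + e x) (-(e x))
      have h2 : ‖e x‖ ≤ r * ‖(x:Y)‖ := by
        rw [he]
        have : ‖x‖ = ‖(x:Y)‖ := rfl
        nlinarith [norm_nonneg (x:Y)]
      linarith
  -- norm of iY
  have normYub : ∀ y : Y, ‖iY y‖ ≤ r * ‖y‖ := by
    intro y
    rw [iY_apply]
    calc ‖(Submodule.Quotient.mk (r • jY y) : W ⧸ L)‖ ≤ ‖r • jY y‖ :=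
          Submodule.Quotient.norm_mk_le L _
      _ = r * ‖y‖ := by
          rw [norm_smul, Real.norm_of_nonneg hr0.le, norm1, jY_fst, jY_snd, norm_zero, zero_add]
  have normYlb : ∀ y : Y, r⁻¹ * ‖y‖ ≤ ‖iY y‖ := by
    intro y
    rw [iY_apply]
    refine quot_norm_lower L _ fun m hm => ?_
    rw [Submodule.Quotient.eq] at hm
    obtain ⟨x, hx⟩ := hm
    have : m = jA (e x) + r • jY (y - (x:Y)) := by
      have := g_apply x
      rw [this] at hx
      rw [map_sub]
      linear_combination (norm := module) -hx
    rw [this, norm1]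
    have hfst : (jA (e x) + r • jY (y - (x:Y))).fst = e x := by
      rw [WithLp.add_fst, WithLp.smul_fst, jA_fst, jY_fst, smul_zero, add_zero]
    have hsnd : (jA (e x) + r • jY (y - (x:Y))).snd = r • (y - (x:Y)) := by
      rw [WithLp.add_snd, WithLp.smul_snd, jA_snd, jY_snd, zero_add]
    rw [hfst, hsnd, norm_smul, Real.norm_of_nonneg hr0.le, he]
    have hxx : ‖x‖ = ‖(x:Y)‖ := rfl
    have h1 : ‖y‖ ≤ ‖(x:Y)‖ + ‖y - (x:Y)‖ := by
      simpa using norm_add_le (x:Y) (y - (x:Y))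
    have h2 : r⁻¹ * ‖y‖ ≤ ‖y‖ := by
      have : r⁻¹ ≤ 1 := by
        rw [inv_le_one_iff₀]; right; exact hr1
      nlinarith [norm_nonneg y]
    have h3 : ‖y - (x:Y)‖ ≤ r * ‖y - (x:Y)‖ := by nlinarith [norm_nonneg (y - (x:Y))]
    rw [hxx]
    linarith
  -- the operator
  let f : W →ₗ[ℝ] Z :=
    (π : A →ₗ[ℝ] Z) ∘ₗ (LinearMap.fst ℝ A Y ∘ₗ (WithLp.linearEquiv 1 ℝ (A × Y)).toLinearMap)
      + r⁻¹ • ((T : Y →ₗ[ℝ] Z) ∘ₗ (LinearMap.snd ℝ A Y ∘ₗ (WithLp.linearEquiv 1 ℝ (A × Y)).toLinearMap))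
  have f_apply : ∀ w : W, f w = π w.fst + r⁻¹ • T w.snd := fun _ => rfl
  have hLker : L ≤ LinearMap.ker f := by
    rintro w ⟨x, rfl⟩
    rw [LinearMap.mem_ker, g_apply, map_sub, f_apply, f_apply]
    rw [jA_fst, jA_snd, WithLp.smul_fst, WithLp.smul_snd, jY_fst, jY_snd, smul_zero]
    rw [hcomm, map_zero, smul_zero, add_zero, map_smul, smul_smul, inv_mul_cancel₀ hr0.ne',
      one_smul]
    simp
  let π'lin : (W ⧸ L) →ₗ[ℝ] Z := L.liftQ f hLker
  have π'lin_mk : ∀ w : W, π'lin (Submodule.Quotient.mk w) = f w := fun _ => rfl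
  haveI : FiniteDimensional ℝ (W ⧸ L) := inferInstance
  let π' : (W ⧸ L) →L[ℝ] Z := LinearMap.toContinuousLinearMap π'lin
  have π'_bound : ∀ c : W ⧸ L, ‖π' c‖ ≤ ‖c‖ := by
    intro c
    refine quot_norm_lower L c fun m hm => ?_
    have : π' c = f m := by rw [← hm]; rfl
    rw [this, norm1]
    calc ‖f m‖ ≤ ‖π m.fst‖ + ‖r⁻¹ • T m.snd‖ := by rw [f_apply]; exact norm_add_le _ _
      _ ≤ ‖m.fst‖ + ‖m.snd‖ := by
          have h1 : ‖π m.fst‖ ≤ 1 * ‖m.fst‖ := π.le_of_opNorm_le hπ _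
          have h2 : ‖T m.snd‖ ≤ r * ‖m.snd‖ := T.le_of_opNorm_le hT _
          have h3 : ‖r⁻¹ • T m.snd‖ = r⁻¹ * ‖T m.snd‖ := by
            rw [norm_smul, Real.norm_of_nonneg (inv_nonneg.mpr hr0.le)]
          have h4 : r⁻¹ * ‖T m.snd‖ ≤ r⁻¹ * (r * ‖m.snd‖) := by
            apply mul_le_mul_of_nonneg_left h2 (inv_nonneg.mpr hr0.le)
          rw [h3]
          rw [inv_mul_cancel_left₀ hr0.ne'] at h4
          linarith
  -- transport to a Type-0 carrier
  have h1r : 1 + (r - 1) = r := by ring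
  let ψ : (W ⧸ L) ≃ₗ[ℝ] NormCopy (W ⧸ L) := copyEquiv (W ⧸ L)
  have hnorm : ∀ v : NormCopy (W ⧸ L), ‖v‖ = ‖ψ.symm v‖ := normCopy_norm (W ⧸ L)
  let C : FinDimBanach := ⟨NormCopy (W ⧸ L)⟩
  let iAC : A →ₗ[ℝ] NormCopy (W ⧸ L) := ψ.toLinearMap ∘ₗ iA
  let iYC : Y →ₗ[ℝ] NormCopy (W ⧸ L) := ψ.toLinearMap ∘ₗ iY
  let π'C : NormCopy (W ⧸ L) →L[ℝ] Z :=
    LinearMap.toContinuousLinearMap (π'lin ∘ₗ ψ.symm.toLinearMap)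
  refine ⟨C, iAC, iYC, π'C, ?_, ?_, ?_, ?_, ?_, ?_⟩
  · intro a
    show ‖ψ (iA a)‖ = ‖a‖
    rw [hnorm, LinearEquiv.symm_apply_apply]
    exact normA a
  · intro y
    have h : ‖iYC y‖ = ‖iY y‖ := by
      show ‖ψ (iY y)‖ = _
      rw [hnorm, LinearEquiv.symm_apply_apply]
    rw [h1r, h]
    exact ⟨normYlb y, normYub y⟩
  · refine ContinuousLinearMap.opNorm_le_bound _ zero_le_one fun v => ?_
    rw [one_mul, hnorm]
    exact π'_bound (ψ.symm v)
  · intro x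
    show ψ (iA (e x)) = ψ (iY (x : Y))
    exact congrArg ψ (hcommQ x)
  · intro a
    show π'lin (ψ.symm (ψ (iA a))) = π a
    rw [LinearEquiv.symm_apply_apply]
    show f (jA a) = π a
    rw [f_apply, jA_fst, jA_snd, map_zero, smul_zero, add_zero]
  · intro y
    show π'lin (ψ.symm (ψ (iY y))) = T y
    rw [LinearEquiv.symm_apply_apply, iY_apply y]
    show f (r • jY y) = T y
    rw [f_apply, WithLp.smul_fst, WithLp.smul_snd, jY_fst, jY_snd, smul_zero, map_zero,
      zero_add, map_smul, smul_smul, inv_mul_cancel₀ hr0.ne', one_smul]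
end

section
/- Let (Gₙ)_{n∈ℕ} be a sequence of separable Banach spaces, each of almost universal disposition for finite-dimensional normed spaces, and for each n let πₙ : Gₙ₊₁ → Gₙ be a nonexpansive linear operator satisfying: for every ε > 0, all finite-dimensional normed spaces E ⊆ F, every nonexpansive linear operator T : F → Gₙ and every isometric embedding e : E → Gₙ₊₁ with T ↾ E = πₙ ∘ e, there exists an ε-isometric embedding f : F → Gₙ₊₁ with f ↾ E = e and πₙ ∘ f = T. Let E = {x ∈ ∏ₙ Gₙ : πₙ(xₙ₊₁) = xₙ for all n}, equipped with the (increasing) sequence of seminorms pₙ(x) = ‖xₙ‖. Then E is of almost universal disposition for finite-dimensional graded Fréchet spaces: for every ε > 0, all finite-dimensional graded Fréchet spaces X ⊆ Y and every isometric embedding f₀ : X → E there exists an ε-isometric embedding f : Y → E with f ↾ X = f₀. -/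
/-- The inverse limit `E = {x ∈ ∏ₙ Gₙ : πₙ(xₙ₊₁) = xₙ}` of a sequence of Banach spaces along
linear operators `πₙ : Gₙ₊₁ → Gₙ`, as a submodule of the product. -/
def invLimit (G : ℕ → Type*) [∀ n, NormedAddCommGroup (G n)] [∀ n, NormedSpace ℝ (G n)]
    (π : ∀ n : ℕ, G (n + 1) →L[ℝ] G n) : Submodule ℝ (∀ n, G n) where
  carrier := {x | ∀ n : ℕ, π n (x (n + 1)) = x n}
  zero_mem' := by intro n; simp
  add_mem' := by
    intro a b ha hb n
    simp only [Pi.add_apply, map_add, ha n, hb n]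
  smul_mem' := by
    intro c x hx n
    simp only [Pi.smul_apply, map_smul, hx n]

/-- The `n`-th seminorm `pₙ(x) = ‖xₙ‖` on the inverse limit. -/
noncomputable def invLimitSeminorm (G : ℕ → Type*) [∀ n, NormedAddCommGroup (G n)]
    [∀ n, NormedSpace ℝ (G n)] (π : ∀ n : ℕ, G (n + 1) →L[ℝ] G n) (n : ℕ) :
    Seminorm ℝ (invLimit G π) where
  toFun x := ‖(x : ∀ k, G k) n‖
  map_zero' := by simp
  add_le' := by intro x y; simpa using norm_add_le ((x : ∀ k, G k) n) ((y : ∀ k, G k) n)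
  neg' := by intro x; simp
  smul' := by intro c x; simp [norm_smul]


lemma exists_normify (Y : Type) [AddCommGroup Y] [Module ℝ Y] [FiniteDimensional ℝ Y]
    (N : Seminorm ℝ Y) (X : Submodule ℝ Y) :
    ∃ (F : Type) (_i1 : NormedAddCommGroup F) (_i2 : NormedSpace ℝ F)
      (_i3 : FiniteDimensional ℝ F) (P : Y →ₗ[ℝ] F) (σ : F →ₗ[ℝ] Y)
      (s : ↥(X.map P) →ₗ[ℝ] ↥X),
      (∀ y : Y, ‖P y‖ = N y) ∧ (∀ z : F, P (σ z) = z) ∧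
      (∀ z : ↥(X.map P), P ((s z : ↥X) : Y) = (z : F)) := by
  classical
  set K : Submodule ℝ Y :=
    { carrier := {y | N y = 0}
      zero_mem' := map_zero N
      add_mem' := by
        intro a b ha hb
        refine le_antisymm ?_ (apply_nonneg N _)
        calc N (a + b) ≤ N a + N b := map_add_le_add N a b
        _ = 0 := by simp [Set.mem_setOf_eq.mp ha, Set.mem_setOf_eq.mp hb]
      smul_mem' := by
        intro c x hx
        have : N x = 0 := hx
        rw [Set.mem_setOf_eq, map_smul_eq_mul, this, mul_zero] } with hK
  obtain ⟨W, hW⟩ := K.exists_isCompl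
  letI : NormedAddCommGroup ↥W := AddGroupNorm.toNormedAddCommGroup
    { toFun := fun w => N (w : Y)
      map_zero' := by simp
      add_le' := fun a b => by
        simpa using map_add_le_add N (a : Y) (b : Y)
      neg' := fun a => by simpa using map_neg_eq_map N (a : Y)
      eq_zero_of_map_eq_zero' := by
        intro w hw
        have hwK : (w : Y) ∈ K := hw
        have := Submodule.disjoint_def.mp hW.disjoint (w : Y) hwK w.2
        exact Subtype.ext this }
  letI : NormedSpace ℝ ↥W :=
    { (inferInstance : Module ℝ ↥W) with
      norm_smul_le := fun c w => by
        show N ((c • w : ↥W) : Y) ≤ ‖c‖ * N (w : Y)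
        rw [Submodule.coe_smul, map_smul_eq_mul] }
  set P : Y →ₗ[ℝ] ↥W := Submodule.linearProjOfIsCompl W K hW.symm with hPdef
  have hker : ∀ y : Y, y - (P y : Y) ∈ K := by
    intro y
    have h := Submodule.projection_add_projection_eq_self hW.symm y
    have h2 : y - (P y : Y) = (Submodule.linearProjOfIsCompl K W hW.symm.symm y : Y) := by
      rw [hPdef]; exact sub_eq_of_eq_add' h.symm
    rw [h2]
    exact (Submodule.linearProjOfIsCompl K W hW.symm.symm y).2
  have hPnorm : ∀ y : Y, ‖P y‖ = N y := by
    intro y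
    show N ((P y : Y)) = N y
    have h0 : N (y - (P y : Y)) = 0 := hker y
    refine le_antisymm ?_ ?_
    · calc N ((P y : Y)) = N (y + -(y - (P y : Y))) := by congr 1; abel
      _ ≤ N y + N (-(y - (P y : Y))) := map_add_le_add N _ _
      _ = N y := by rw [map_neg_eq_map, h0, add_zero]
    · calc N y = N ((P y : Y) + (y - (P y : Y))) := by congr 1; abel
      _ ≤ N ((P y : Y)) + N (y - (P y : Y)) := map_add_le_add N _ _
      _ = N ((P y : Y)) := by rw [h0, add_zero]
  have hσ : ∀ z : ↥W, P ((W.subtype) z) = z := fun z =>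
    Submodule.linearProjOfIsCompl_apply_left hW.symm z
  set PX : ↥X →ₗ[ℝ] ↥(X.map P) :=
    LinearMap.codRestrict (X.map P) (P ∘ₗ X.subtype)
      (fun x => Submodule.mem_map_of_mem x.2) with hPX
  have hPXsurj : LinearMap.range PX = ⊤ := by
    rw [LinearMap.range_eq_top]
    rintro ⟨z, hz⟩
    obtain ⟨x, hx, hPx⟩ := hz
    exact ⟨⟨x, hx⟩, Subtype.ext hPx⟩
  obtain ⟨s, hs⟩ := PX.exists_rightInverse_of_surjective hPXsurj
  refine ⟨↥W, inferInstance, inferInstance, inferInstance, P, W.subtype, s, hPnorm, hσ, ?_⟩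
  intro z
  have h1 : PX (s z) = z := LinearMap.ext_iff.mp hs z
  have h2 : ((PX (s z) : ↥(X.map P)) : ↥W) = (z : ↥W) := by rw [h1]
  simpa [hPX, LinearMap.codRestrict_apply] using h2

/-- Let `(Gₙ)` be separable Banach spaces of almost universal disposition for finite-dimensional
normed spaces and `πₙ : Gₙ₊₁ → Gₙ` nonexpansive operators with the exact extension property (2').
Then the inverse limit `E = {x : πₙ(xₙ₊₁) = xₙ}` with the seminorms `pₙ(x) = ‖xₙ‖` is of almost
universal disposition for finite-dimensional graded Fréchet spaces. -/
theorem invLimit_almost_universal_disposition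
    (G : ℕ → Type*) [∀ n, NormedAddCommGroup (G n)] [∀ n, NormedSpace ℝ (G n)]
    [∀ n, CompleteSpace (G n)] [∀ n, TopologicalSpace.SeparableSpace (G n)]
    -- each `Gₙ` is of almost universal disposition for finite-dimensional normed spaces:
    (hG : ∀ (n : ℕ) (ε : ℝ), 0 < ε →
      ∀ (F : Type) [NormedAddCommGroup F] [NormedSpace ℝ F] [FiniteDimensional ℝ F]
        (E : Submodule ℝ F) (e : E →ₗ[ℝ] G n), (∀ x : E, ‖e x‖ = ‖x‖) →
        ∃ f : F →ₗ[ℝ] G n, (∀ x : E, f (x : F) = e x) ∧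
          ∀ y : F, (1 + ε)⁻¹ * ‖y‖ ≤ ‖f y‖ ∧ ‖f y‖ ≤ (1 + ε) * ‖y‖)
    (π : ∀ n : ℕ, G (n + 1) →L[ℝ] G n) (hπ : ∀ n, ‖π n‖ ≤ 1)
    -- each `πₙ` satisfies the exact extension property (2'):
    (hπ2 : ∀ (n : ℕ) (ε : ℝ), 0 < ε →
      ∀ (F : Type) [NormedAddCommGroup F] [NormedSpace ℝ F] [FiniteDimensional ℝ F]
        (E : Submodule ℝ F) (T : F →L[ℝ] G n), ‖T‖ ≤ 1 →
        ∀ e : E →ₗ[ℝ] G (n + 1), (∀ x : E, ‖e x‖ = ‖x‖) →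
          (∀ x : E, T (x : F) = π n (e x)) →
          ∃ f : F →ₗ[ℝ] G (n + 1), (∀ x : E, f (x : F) = e x) ∧
            (∀ y : F, π n (f y) = T y) ∧
            ∀ y : F, (1 + ε)⁻¹ * ‖y‖ ≤ ‖f y‖ ∧ ‖f y‖ ≤ (1 + ε) * ‖y‖) :
    -- conclusion: the inverse limit is of almost universal disposition for
    -- finite-dimensional graded Fréchet spaces
    ∀ ε : ℝ, 0 < ε →
      ∀ (Y : Type) [AddCommGroup Y] [Module ℝ Y] [FiniteDimensional ℝ Y]
        (q : ℕ → Seminorm ℝ Y), Monotone q → (∀ y : Y, (∀ i : ℕ, q i y = 0) → y = 0) →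
        ∀ (X : Submodule ℝ Y) (f₀ : X →ₗ[ℝ] invLimit G π),
          (∀ (i : ℕ) (x : X), invLimitSeminorm G π i (f₀ x) = q i (x : Y)) →
          ∃ f : Y →ₗ[ℝ] invLimit G π, (∀ x : X, f (x : Y) = f₀ x) ∧
            ∀ (i : ℕ) (y : Y),
              (1 + ε)⁻¹ * q i y ≤ invLimitSeminorm G π i (f y) ∧
              invLimitSeminorm G π i (f y) ≤ (1 + ε) * q i y := by
  intro ε hε Y _iY1 _iY2 _iY3 q hq _hsep X f₀ hf₀
  classical
  -- norms of levels of `f₀`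
  have hf₀' : ∀ (i : ℕ) (x : ↥X), ‖(f₀ x : ∀ k, G k) i‖ = q i (x : Y) := by
    intro i x; rw [← hf₀ i x]; rfl
  have hlim : ∀ (x : ↥X) (n : ℕ),
      π n ((f₀ x : ∀ k, G k) (n + 1)) = (f₀ x : ∀ k, G k) n := fun x n => (f₀ x).2 n
  -- level maps of `f₀`
  let lev : ∀ m : ℕ, ↥X →ₗ[ℝ] G m :=
    fun m => LinearMap.proj m ∘ₗ ((invLimit G π).subtype ∘ₗ f₀)
  have hlev : ∀ (m : ℕ) (x : ↥X), lev m x = (f₀ x : ∀ k, G k) m := fun m x => rfl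
  -- the error budget
  set t : ℕ → ℝ := fun n => ε * (1 - (2⁻¹ : ℝ) ^ (n + 1)) with htdef
  have hpow_pos : ∀ n : ℕ, (0 : ℝ) < (2⁻¹ : ℝ) ^ n := fun n => pow_pos (by norm_num) n
  have hpow_le1 : ∀ n : ℕ, ((2⁻¹ : ℝ)) ^ n ≤ 1 := fun n => pow_le_one₀ (by norm_num) (by norm_num)
  have ht0 : ∀ n, 0 ≤ t n := by
    intro n; rw [htdef]
    have := hpow_le1 (n + 1); nlinarith
  have htε : ∀ n, t n ≤ ε := by
    intro n; rw [htdef]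
    have := (hpow_pos (n + 1)).le; nlinarith
  have htsucc : ∀ n, t (n + 1) - t n = ε * (2⁻¹ : ℝ) ^ (n + 2) := by
    intro n; rw [htdef]; simp only []
    rw [pow_succ ((2:ℝ)⁻¹) (n+1)]; ring
  -- the inductive predicate
  let Good : ∀ n : ℕ, (Y →ₗ[ℝ] G n) → Prop := fun n g =>
    (∀ x : ↥X, g (x : Y) = (f₀ x : ∀ k, G k) n) ∧
    ∀ y : Y, (1 + ε)⁻¹ * q n y ≤ ‖g y‖ ∧ ‖g y‖ ≤ (1 + t n) * q n y
  -- base case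
  have base : ∃ g : Y →ₗ[ℝ] G 0, Good 0 g := by
    obtain ⟨F, i1, i2, i3, P, σ, s, hP, hσ, hs⟩ := exists_normify Y (q 0) X
    set e : ↥(X.map P) →ₗ[ℝ] G 0 := lev 0 ∘ₗ s with hedef
    have he : ∀ z : ↥(X.map P), ‖e z‖ = ‖z‖ := by
      intro z
      have h1 : ‖e z‖ = q 0 ((s z : Y)) := hf₀' 0 (s z)
      have h2 : ‖(z : F)‖ = q 0 ((s z : Y)) := by rw [← hs z, hP]
      rw [h1, ← h2]; rfl
    have hδ0 : 0 < t 0 := by rw [htdef]; norm_num; linarith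
    obtain ⟨fb, hfb1, hfb2⟩ := hG 0 (t 0) hδ0 F (X.map P) e he
    refine ⟨fb ∘ₗ P, ?_, ?_⟩
    · intro x
      have hxmem : P (x : Y) ∈ X.map P := Submodule.mem_map_of_mem x.2
      set z : ↥(X.map P) := ⟨P (x : Y), hxmem⟩ with hz
      have h1 : fb (P (x : Y)) = e z := hfb1 z
      have hPz : P ((s z : Y)) = P (x : Y) := hs z
      have hdiff : q 0 ((s z : Y) - (x : Y)) = 0 := by
        have h3 := hP ((s z : Y) - (x : Y))
        rw [map_sub, hPz, sub_self, norm_zero] at h3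
        exact h3.symm
      have h4 : (f₀ (s z) : ∀ k, G k) 0 = (f₀ x : ∀ k, G k) 0 := by
        have h5 : (f₀ (s z) : ∀ k, G k) 0 - (f₀ x : ∀ k, G k) 0
            = (f₀ (s z - x) : ∀ k, G k) 0 := by rw [map_sub]; rfl
        have h6 : ‖(f₀ (s z - x) : ∀ k, G k) 0‖ = 0 := by
          rw [hf₀' 0 (s z - x)]
          simpa using hdiff
        have h7 := norm_eq_zero.mp h6
        rw [← h5] at h7
        exact sub_eq_zero.mp h7
      show fb (P (x : Y)) = (f₀ x : ∀ k, G k) 0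
      rw [h1]
      show (f₀ (s z) : ∀ k, G k) 0 = _
      exact h4
    · intro y
      obtain ⟨hl, hu⟩ := hfb2 (P y)
      rw [hP] at hl hu
      constructor
      · refine le_trans ?_ hl
        show (1 + ε)⁻¹ * q 0 y ≤ (1 + t 0)⁻¹ * q 0 y
        have h8 : (1 + ε)⁻¹ ≤ (1 + t 0)⁻¹ := by
          apply inv_anti₀
          · linarith [hδ0]
          · linarith [htε 0]
        exact mul_le_mul_of_nonneg_right h8 (apply_nonneg _ _)
      · exact hu
  -- inductive step
  have step : ∀ (n : ℕ) (g : Y →ₗ[ℝ] G n), Good n g →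
      ∃ g' : Y →ₗ[ℝ] G (n + 1), Good (n + 1) g' ∧ ∀ y : Y, π n (g' y) = g y := by
    intro n g hg
    obtain ⟨hgA, hgB⟩ := hg
    set N : Seminorm ℝ Y := q (n + 1) ⊔ (normSeminorm ℝ (G n)).comp g with hNdef
    have hNapp : ∀ y : Y, N y = max (q (n + 1) y) ‖g y‖ := by
      intro y; rw [hNdef, Seminorm.sup_apply]; rfl
    have hNq : ∀ y : Y, q (n + 1) y ≤ N y := fun y => by rw [hNapp]; exact le_max_left _ _
    have hNg : ∀ y : Y, ‖g y‖ ≤ N y := fun y => by rw [hNapp]; exact le_max_right _ _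
    have hNle : ∀ y : Y, N y ≤ (1 + t n) * q (n + 1) y := by
      intro y; rw [hNapp]
      have hqm : q n y ≤ q (n + 1) y := hq (Nat.le_succ n) y
      have hq1 : (0:ℝ) ≤ q (n + 1) y := apply_nonneg _ _
      have hqn : (0:ℝ) ≤ q n y := apply_nonneg _ _
      apply max_le
      · nlinarith [ht0 n]
      · calc ‖g y‖ ≤ (1 + t n) * q n y := (hgB y).2
        _ ≤ (1 + t n) * q (n + 1) y := by nlinarith [ht0 n]
    obtain ⟨F, i1, i2, i3, P, σ, s, hP, hσ, hs⟩ := exists_normify Y N X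
    -- facts about maps factoring through `P`
    have hgP : ∀ a b : Y, P a = P b → g a = g b := by
      intro a b hab
      have h1 : N (a - b) = 0 := by rw [← hP, map_sub, hab, sub_self, norm_zero]
      have h2 : ‖g (a - b)‖ = 0 :=
        le_antisymm (h1 ▸ hNg (a - b)) (norm_nonneg _)
      have h3 := norm_eq_zero.mp h2
      rw [map_sub] at h3
      exact sub_eq_zero.mp h3
    have hq1P : ∀ a b : Y, P a = P b → q (n + 1) (a - b) = 0 := by
      intro a b hab
      have h1 : N (a - b) = 0 := by rw [← hP, map_sub, hab, sub_self, norm_zero]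
      exact le_antisymm (h1 ▸ hNq (a - b)) (apply_nonneg _ _)
    -- the operator `T`
    have hT0 : ∀ z : F, ‖(g ∘ₗ σ) z‖ ≤ 1 * ‖z‖ := by
      intro z
      rw [one_mul]
      calc ‖(g ∘ₗ σ) z‖ = ‖g (σ z)‖ := rfl
      _ ≤ N (σ z) := hNg (σ z)
      _ = ‖P (σ z)‖ := (hP (σ z)).symm
      _ = ‖z‖ := by rw [hσ z]
    set T : F →L[ℝ] G n := LinearMap.mkContinuous (g ∘ₗ σ) 1 hT0 with hTdef
    have hTnorm : ‖T‖ ≤ 1 := LinearMap.mkContinuous_norm_le _ zero_le_one _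
    have hTapp : ∀ z : F, T z = g (σ z) := fun z => rfl
    -- the embedding `e`
    set e : ↥(X.map P) →ₗ[ℝ] G (n + 1) := lev (n + 1) ∘ₗ s with hedef
    have heapp : ∀ z : ↥(X.map P), e z = (f₀ (s z) : ∀ k, G k) (n + 1) := fun z => rfl
    have he : ∀ z : ↥(X.map P), ‖e z‖ = ‖z‖ := by
      intro z
      have h1 : ‖e z‖ = q (n + 1) ((s z : Y)) := hf₀' (n + 1) (s z)
      have h2 : ‖g ((s z : Y))‖ = q n ((s z : Y)) := by
        rw [hgA (s z)]; exact hf₀' n (s z)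
      have h3 : N ((s z : Y)) = q (n + 1) ((s z : Y)) := by
        rw [hNapp, h2]
        exact max_eq_left (hq (Nat.le_succ n) _)
      have h4 : ‖(z : F)‖ = N ((s z : Y)) := by rw [← hs z, hP]
      rw [h1, ← h3, ← h4]; rfl
    have hcompat : ∀ z : ↥(X.map P), T (z : F) = π n (e z) := by
      intro z
      rw [hTapp, heapp, hlim (s z) n, ← hgA (s z)]
      exact hgP _ _ (by rw [hσ, hs])
    -- choose `δ`
    set δ : ℝ := (t (n + 1) - t n) / (1 + t n) with hδdef
    have hden : (0:ℝ) < 1 + t n := by linarith [ht0 n]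
    have hnum : (0:ℝ) < t (n + 1) - t n := by
      rw [htsucc n]; positivity
    have hδpos : 0 < δ := div_pos hnum hden
    have hδε : δ ≤ ε := by
      have h1 : δ ≤ t (n + 1) - t n := div_le_self hnum.le (by linarith [ht0 n])
      have := htε (n + 1); have := ht0 n
      linarith
    have hδmul : (1 + δ) * (1 + t n) = 1 + t (n + 1) := by
      rw [hδdef]; field_simp; ring
    obtain ⟨fb, hfb1, hfb2, hfb3⟩ := hπ2 n δ hδpos F (X.map P) T hTnorm e he hcompat
    refine ⟨fb ∘ₗ P, ⟨?_, ?_⟩, ?_⟩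
    · intro x
      have hxmem : P (x : Y) ∈ X.map P := Submodule.mem_map_of_mem x.2
      set z : ↥(X.map P) := ⟨P (x : Y), hxmem⟩ with hz
      have h1 : fb (P (x : Y)) = e z := hfb1 z
      have hdiff : q (n + 1) ((s z : Y) - (x : Y)) = 0 := hq1P _ _ (by rw [hs z])
      have h4 : (f₀ (s z) : ∀ k, G k) (n + 1) = (f₀ x : ∀ k, G k) (n + 1) := by
        have h5 : (f₀ (s z) : ∀ k, G k) (n + 1) - (f₀ x : ∀ k, G k) (n + 1)
            = (f₀ (s z - x) : ∀ k, G k) (n + 1) := by rw [map_sub]; rfl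
        have h6 : ‖(f₀ (s z - x) : ∀ k, G k) (n + 1)‖ = 0 := by
          rw [hf₀' (n + 1) (s z - x)]
          simpa using hdiff
        have h7 := norm_eq_zero.mp h6
        rw [← h5] at h7
        exact sub_eq_zero.mp h7
      show fb (P (x : Y)) = (f₀ x : ∀ k, G k) (n + 1)
      rw [h1, heapp]
      exact h4
    · intro y
      obtain ⟨hl, hu⟩ := hfb3 (P y)
      rw [hP] at hl hu
      constructor
      · have h8 : (1 + ε)⁻¹ * q (n + 1) y ≤ (1 + δ)⁻¹ * q (n + 1) y := by
          have : (1 + ε)⁻¹ ≤ (1 + δ)⁻¹ := by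
            apply inv_anti₀
            · linarith
            · linarith
          exact mul_le_mul_of_nonneg_right this (apply_nonneg _ _)
        have h9 : (1 + δ)⁻¹ * q (n + 1) y ≤ (1 + δ)⁻¹ * N y :=
          mul_le_mul_of_nonneg_left (hNq y) (by positivity)
        exact le_trans h8 (le_trans h9 hl)
      · have h10 : ‖fb (P y)‖ ≤ (1 + δ) * ((1 + t n) * q (n + 1) y) :=
          le_trans hu (mul_le_mul_of_nonneg_left (hNle y) (by linarith))
        calc ‖(fb ∘ₗ P) y‖ = ‖fb (P y)‖ := rfl
        _ ≤ (1 + δ) * ((1 + t n) * q (n + 1) y) := h10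
        _ = (1 + t (n + 1)) * q (n + 1) y := by rw [← mul_assoc, hδmul]
    · intro y
      show π n (fb (P y)) = g y
      rw [hfb2 (P y), hTapp]
      exact hgP _ _ (hσ (P y))
  -- build the chain of maps
  let seq : ∀ n : ℕ, {g : Y →ₗ[ℝ] G n // Good n g} := fun n =>
    Nat.rec ⟨Classical.choose base, Classical.choose_spec base⟩
      (fun n p => ⟨Classical.choose (step n p.1 p.2),
        (Classical.choose_spec (step n p.1 p.2)).1⟩) n
  have hrel : ∀ (n : ℕ) (y : Y), π n ((seq (n + 1)).1 y) = (seq n).1 y := fun n y =>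
    (Classical.choose_spec (step n (seq n).1 (seq n).2)).2 y
  let fpi : Y →ₗ[ℝ] (∀ n, G n) := LinearMap.pi fun n => (seq n).1
  have hmem : ∀ y : Y, fpi y ∈ invLimit G π := fun y n => hrel n y
  let f : Y →ₗ[ℝ] ↥(invLimit G π) := fpi.codRestrict (invLimit G π) hmem
  refine ⟨f, ?_, ?_⟩
  · intro x
    refine Subtype.ext (funext fun n => ?_)
    show fpi (x : Y) n = (f₀ x : ∀ k, G k) n
    exact (seq n).2.1 x
  · intro i y
    have hbd := (seq i).2.2 y
    have hnorm : invLimitSeminorm G π i (f y) = ‖(seq i).1 y‖ := rfl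
    rw [hnorm]
    refine ⟨hbd.1, le_trans hbd.2 ?_⟩
    have h1 := htε i
    have h2 : (0:ℝ) ≤ q i y := apply_nonneg _ _
    nlinarith
end

section
/- Let X and Y be finite-dimensional graded Fréchet spaces with fixed increasing sequences of seminorms (‖·‖_{X,i})_{i∈ℕ} and (‖·‖_{Y,i})_{i∈ℕ}, let ε > 0, and let f : X → Y be an ε-isometric embedding. Then there exist a finite-dimensional graded Fréchet space Z with seminorms (‖·‖_{Z,i})_{i∈ℕ} and isometric embeddings ι : X → Z and j : Y → Z such that ‖j(f(x)) − ι(x)‖_{Z,i} ≤ ε‖x‖_{X,i} for all i ∈ ℕ and all x ∈ X. -/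
open scoped NNReal


/-- A bundled finite-dimensional graded Fréchet space: a finite-dimensional real vector space
with a fixed increasing separating sequence of seminorms (completeness is automatic in finite
dimension). -/
structure FinGradedFrechet where
  carrier : Type
  [acg : AddCommGroup carrier]
  [mod : Module ℝ carrier]
  [fd : FiniteDimensional ℝ carrier]
  seminorms : ℕ → Seminorm ℝ carrier
  mono : Monotone seminorms
  separating : ∀ x : carrier, (∀ i : ℕ, seminorms i x = 0) → x = 0

attribute [instance] FinGradedFrechet.acg FinGradedFrechet.mod FinGradedFrechet.fd

instance : CoeSort FinGradedFrechet Type := ⟨FinGradedFrechet.carrier⟩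

set_option maxHeartbeats 1000000 in
/-- Let `X` and `Y` be finite-dimensional graded Fréchet spaces, `ε > 0`, and `f : X → Y` an
`ε`-isometric embedding.  Then there exist a finite-dimensional graded Fréchet space `Z` and
isometric embeddings `ι : X → Z` and `j : Y → Z` with
`‖j (f x) - ι x‖_{Z,i} ≤ ε ‖x‖_{X,i}` for all `i` and `x`. -/
theorem eps_isometry_correction
    (X : Type*) [AddCommGroup X] [Module ℝ X] [FiniteDimensional ℝ X]
    (pX : ℕ → Seminorm ℝ X) (hXmono : Monotone pX)
    (hXsep : ∀ x : X, (∀ i : ℕ, pX i x = 0) → x = 0)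
    (Y : Type*) [AddCommGroup Y] [Module ℝ Y] [FiniteDimensional ℝ Y]
    (pY : ℕ → Seminorm ℝ Y) (hYmono : Monotone pY)
    (hYsep : ∀ y : Y, (∀ i : ℕ, pY i y = 0) → y = 0)
    (ε : ℝ) (hε : 0 < ε)
    (f : X →ₗ[ℝ] Y)
    (hf : ∀ (i : ℕ) (x : X),
      (1 + ε)⁻¹ * pX i x ≤ pY i (f x) ∧ pY i (f x) ≤ (1 + ε) * pX i x) :
    ∃ (Z : FinGradedFrechet) (ι : X →ₗ[ℝ] Z) (j : Y →ₗ[ℝ] Z),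
      (∀ (i : ℕ) (x : X), Z.seminorms i (ι x) = pX i x) ∧
      (∀ (i : ℕ) (y : Y), Z.seminorms i (j y) = pY i y) ∧
      (∀ (i : ℕ) (x : X), Z.seminorms i (j (f x) - ι x) ≤ ε * pX i x) := by
  classical
  have h1ε : (0:ℝ) < 1 + ε := by linarith
  have hfl : ∀ (i : ℕ) (x : X), pX i x ≤ (1 + ε) * pY i (f x) := by
    intro i x
    have h := (hf i x).1
    rwa [inv_mul_le_iff₀ h1ε] at h
  have hfu : ∀ (i : ℕ) (x : X), pY i (f x) ≤ (1 + ε) * pX i x := fun i x => (hf i x).2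
  set F := LinearMap.fst ℝ X Y with hF
  set S := LinearMap.snd ℝ X Y with hS
  set g : (X × Y) →ₗ[ℝ] Y := S + f ∘ₗ F with hg
  set εn : ℝ≥0 := ⟨ε, hε.le⟩ with hεn
  set P : ℕ → Seminorm ℝ (X × Y) := fun i => εn • (pX i).comp F + (1 + εn) • (pY i).comp g with hP
  set Q : ℕ → Seminorm ℝ (X × Y) := fun i => (pX i).comp F + (pY i).comp S with hQ
  have hPapp : ∀ (i : ℕ) (u : X × Y), P i u = ε * pX i u.1 + (1 + ε) * pY i (u.2 + f u.1) := by
    intro i u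
    simp [hP, hg, hF, hS, Seminorm.add_apply, Seminorm.smul_apply, Seminorm.comp_apply,
      NNReal.smul_def, hεn, LinearMap.add_apply]
    rfl
  have hQapp : ∀ (i : ℕ) (u : X × Y), Q i u = pX i u.1 + pY i u.2 := by
    intro i u
    simp [hQ, hF, hS, Seminorm.add_apply, Seminorm.comp_apply]
  set q : ℕ → Seminorm ℝ (X × Y) := fun i => P i ⊓ Q i with hq
  have hub : ∀ (i : ℕ) (z u : X × Y), q i z ≤ P i u + Q i (z - u) := by
    intro i z u
    simp only [hq, Seminorm.inf_apply]
    exact ciInf_le Seminorm.bddBelow_range_add u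
  have hlb : ∀ (i : ℕ) (z : X × Y) (c : ℝ), (∀ u, c ≤ P i u + Q i (z - u)) → c ≤ q i z := by
    intro i z c h
    simp only [hq, Seminorm.inf_apply]
    exact le_ciInf h
  -- value on X
  have hqX : ∀ (i : ℕ) (x : X), q i ((x, 0) : X × Y) = pX i x := by
    intro i x
    refine le_antisymm ?_ (hlb i _ _ ?_)
    · have h := hub i ((x,0) : X × Y) 0
      rw [hPapp, hQapp] at h
      simpa using h
    · intro u
      rw [hPapp, hQapp]
      have t1 : pX i x ≤ pX i (x - u.1) + pX i u.1 := by
        have h := map_add_le_add (pX i) (x - u.1) u.1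
        rwa [sub_add_cancel] at h
      have t2 : pY i (f u.1) ≤ pY i (u.2 + f u.1) + pY i u.2 := by
        have h := map_add_le_add (pY i) (u.2 + f u.1) (-u.2)
        have e : (u.2 + f u.1) + -u.2 = f u.1 := by abel
        rwa [e, map_neg_eq_map] at h
      have t3 := hfl i u.1
      have n1 : 0 ≤ pY i (u.2 + f u.1) := apply_nonneg _ _
      have n2 : 0 ≤ pY i u.2 := apply_nonneg _ _
      have n3 : 0 ≤ pX i u.1 := apply_nonneg _ _
      have hsnd : (((x,0) : X × Y) - u).2 = -u.2 := by simp
      have hfst : (((x,0) : X × Y) - u).1 = x - u.1 := by simp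
      rw [hsnd, hfst, map_neg_eq_map]
      have hD : pX i u.1 ≤ (1+ε) * (pY i (u.2 + f u.1) + pY i u.2) :=
        t3.trans (mul_le_mul_of_nonneg_left t2 h1ε.le)
      rcases le_total ε 1 with hc | hc
      · have key : pX i u.1 ≤ ε * pX i u.1 + (1+ε) * pY i (u.2 + f u.1) + pY i u.2 := by
          nlinarith [mul_nonneg (by linarith : (0:ℝ) ≤ 1 - ε) (sub_nonneg.2 hD),
            mul_nonneg hε.le n1, mul_nonneg hε.le n2,
            mul_nonneg (mul_nonneg hε.le hε.le) n1, mul_nonneg (mul_nonneg hε.le hε.le) n2]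
        linarith
      · have key : pX i u.1 ≤ ε * pX i u.1 + (1+ε) * pY i (u.2 + f u.1) + pY i u.2 := by
          nlinarith [mul_nonneg (by linarith : (0:ℝ) ≤ ε - 1) n3, mul_nonneg hε.le n1]
        linarith
  -- value on Y
  have hqY : ∀ (i : ℕ) (y : Y), q i ((0, y) : X × Y) = pY i y := by
    intro i y
    refine le_antisymm ?_ (hlb i _ _ ?_)
    · have h := hub i ((0,y) : X × Y) 0
      rw [hPapp, hQapp] at h
      simpa using h
    · intro u
      rw [hPapp, hQapp]
      have t1 : pY i y ≤ pY i (y - u.2) + pY i u.2 := by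
        have h := map_add_le_add (pY i) (y - u.2) u.2
        rwa [sub_add_cancel] at h
      have t2 : pY i u.2 ≤ pY i (u.2 + f u.1) + pY i (f u.1) := by
        have h := map_add_le_add (pY i) (u.2 + f u.1) (-f u.1)
        have e : (u.2 + f u.1) + -f u.1 = u.2 := by abel
        rwa [e, map_neg_eq_map] at h
      have t3 := hfu i u.1
      have n1 : 0 ≤ pY i (u.2 + f u.1) := apply_nonneg _ _
      have n3 : 0 ≤ pX i u.1 := apply_nonneg _ _
      have hsnd : (((0,y) : X × Y) - u).2 = y - u.2 := by simp
      have hfst : (((0,y) : X × Y) - u).1 = -u.1 := by simp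
      rw [hsnd, hfst, map_neg_eq_map]
      nlinarith [mul_nonneg hε.le n1]
  -- correction bound
  have hqC : ∀ (i : ℕ) (x : X), q i (((-x : X), f x) : X × Y) ≤ ε * pX i x := by
    intro i x
    have h := hub i (((-x : X), f x) : X × Y) (((-x : X), f x) : X × Y)
    rw [hPapp, hQapp] at h
    simpa [map_neg_eq_map] using h
  -- lower bounds for separation
  have hsepX : ∀ (i : ℕ) (z : X × Y), ε / (1 + ε) * pX i z.1 ≤ q i z := by
    intro i z
    refine hlb i _ _ ?_
    intro u
    rw [hPapp, hQapp, Prod.fst_sub, Prod.snd_sub, div_mul_eq_mul_div, div_le_iff₀ h1ε]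
    have t1 : pX i z.1 ≤ pX i (z.1 - u.1) + pX i u.1 := by
      have h := map_add_le_add (pX i) (z.1 - u.1) u.1
      rwa [sub_add_cancel] at h
    have n1 : 0 ≤ pY i (u.2 + f u.1) := apply_nonneg _ _
    have n2 : 0 ≤ pY i (z.2 - u.2) := apply_nonneg _ _
    have n3 : 0 ≤ pX i u.1 := apply_nonneg _ _
    have n4 : 0 ≤ pX i (z.1 - u.1) := apply_nonneg _ _
    nlinarith [mul_nonneg hε.le n1, mul_nonneg hε.le n2, mul_nonneg hε.le n3,
      mul_nonneg hε.le n4, mul_nonneg hε.le (mul_nonneg hε.le n3)]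
  have hsepY : ∀ (i : ℕ) (z : X × Y), ε / (3 * ε + 1) * pY i z.2 ≤ q i z := by
    intro i z
    have h3 : (0:ℝ) < 3 * ε + 1 := by linarith
    refine hlb i _ _ ?_
    intro u
    rw [hPapp, hQapp, Prod.fst_sub, Prod.snd_sub, div_mul_eq_mul_div, div_le_iff₀ h3]
    have t1 : pY i z.2 ≤ pY i (z.2 - u.2) + pY i u.2 := by
      have h := map_add_le_add (pY i) (z.2 - u.2) u.2
      rwa [sub_add_cancel] at h
    have t2 : pY i u.2 ≤ pY i (u.2 + f u.1) + pY i (f u.1) := by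
      have h := map_add_le_add (pY i) (u.2 + f u.1) (-f u.1)
      have e : (u.2 + f u.1) + -f u.1 = u.2 := by abel
      rwa [e, map_neg_eq_map] at h
    have t3 := hfu i u.1
    have n1 : 0 ≤ pY i (u.2 + f u.1) := apply_nonneg _ _
    have n2 : 0 ≤ pY i (z.2 - u.2) := apply_nonneg _ _
    have n3 : 0 ≤ pX i u.1 := apply_nonneg _ _
    have n4 : 0 ≤ pX i (z.1 - u.1) := apply_nonneg _ _
    nlinarith [mul_nonneg hε.le n1, mul_nonneg hε.le n2, mul_nonneg hε.le n3,
      mul_nonneg hε.le n4, mul_nonneg hε.le (mul_nonneg hε.le n3), mul_nonneg hε.le (mul_nonneg hε.le n1)]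
  -- monotonicity
  have hqmono : Monotone q := by
    intro i k hik
    rw [Seminorm.le_def]
    intro z
    simp only [hq, Seminorm.inf_apply]
    refine ciInf_mono Seminorm.bddBelow_range_add fun u => add_le_add ?_ ?_
    · rw [hPapp, hPapp]
      have h1 := Seminorm.le_def.1 (hXmono hik) u.1
      have h2 := Seminorm.le_def.1 (hYmono hik) (u.2 + f u.1)
      have := mul_le_mul_of_nonneg_left h1 hε.le
      have := mul_le_mul_of_nonneg_left h2 h1ε.le
      linarith
    · rw [hQapp, hQapp]
      exact add_le_add (Seminorm.le_def.1 (hXmono hik) _) (Seminorm.le_def.1 (hYmono hik) _)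
  -- transport to a Type-0 model Z
  let n := Module.finrank ℝ (X × Y)
  let e : (Fin n → ℝ) ≃ₗ[ℝ] (X × Y) := (Module.finBasis ℝ (X × Y)).equivFun.symm
  refine ⟨{ carrier := Fin n → ℝ
            seminorms := fun i => (q i).comp e.toLinearMap
            mono := fun i k hik => Seminorm.comp_mono _ (hqmono hik)
            separating := ?_ },
          e.symm.toLinearMap ∘ₗ LinearMap.inl ℝ X Y,
          e.symm.toLinearMap ∘ₗ LinearMap.inr ℝ X Y, ?_, ?_, ?_⟩
  · intro v hv
    have hv' : ∀ i : ℕ, q i (e v) = 0 := by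
      intro i
      have h := hv i
      simpa [Seminorm.comp_apply] using h
    have hx : ∀ i : ℕ, pX i (e v).1 = 0 := by
      intro i
      have h := hsepX i (e v)
      rw [hv' i] at h
      have hpos : 0 < ε / (1 + ε) := div_pos hε h1ε
      have := apply_nonneg (pX i) (e v).1
      nlinarith
    have hy : ∀ i : ℕ, pY i (e v).2 = 0 := by
      intro i
      have h := hsepY i (e v)
      rw [hv' i] at h
      have hpos : 0 < ε / (3 * ε + 1) := div_pos hε (by linarith)
      have := apply_nonneg (pY i) (e v).2
      nlinarith
    have h1 : (e v).1 = 0 := hXsep _ hx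
    have h2 : (e v).2 = 0 := hYsep _ hy
    have : e v = 0 := by
      ext
      · rw [h1]; rfl
      · rw [h2]; rfl
    simpa using (e.map_eq_zero_iff).1 this
  · intro i x
    simp only [Seminorm.comp_apply, LinearMap.coe_comp, Function.comp_apply,
      LinearEquiv.coe_coe, LinearMap.inl_apply, LinearEquiv.apply_symm_apply]
    exact hqX i x
  · intro i y
    simp only [Seminorm.comp_apply, LinearMap.coe_comp, Function.comp_apply,
      LinearEquiv.coe_coe, LinearMap.inr_apply, LinearEquiv.apply_symm_apply]
    exact hqY i y
  · intro i x
    have hdiff : (e.symm.toLinearMap ∘ₗ LinearMap.inr ℝ X Y) (f x)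
        - (e.symm.toLinearMap ∘ₗ LinearMap.inl ℝ X Y) x = e.symm (((-x : X), f x) : X × Y) := by
      simp only [LinearMap.coe_comp, Function.comp_apply, LinearMap.inr_apply,
        LinearMap.inl_apply, LinearEquiv.coe_coe]
      rw [← map_sub]
      congr 1
      ext
      · simp
      · simp
    rw [hdiff]
    simp only [Seminorm.comp_apply, LinearEquiv.coe_coe, LinearEquiv.apply_symm_apply]
    exact hqC i x
end

section
/- Let (Gₙ)_{n∈ℕ} be a sequence of Banach spaces and for each n let πₙ : Gₙ₊₁ → Gₙ be a nonexpansive linear operator with the lifting property: for every separable Banach space B and every nonexpansive linear operator T : B → Gₙ there exists an isometric embedding i : B → Gₙ₊₁ with T = πₙ ∘ i. Assume furthermore that every separable Banach space embeds isometrically into G₁. Then for every separable Fréchet space X with an increasing separating sequence of seminorms (‖·‖ₙ)_{n∈ℕ} there exists a linear map f : X → ∏ₙ Gₙ such that ‖(f(x))ₙ‖ = ‖x‖ₙ and πₙ((f(x))ₙ₊₁) = (f(x))ₙ for all n ∈ ℕ and x ∈ X; in particular f is an injective linear map preserving all seminorms. -/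
noncomputable section AuxEmb
open UniformSpace TopologicalSpace NNReal

variable {X : Type*} [AddCommGroup X] [Module ℝ X]

/-- Type synonym of `X` endowed with the seminorm `q`. -/
@[nolint unusedArguments]
def SemiNormedOf {X : Type*} [AddCommGroup X] [Module ℝ X] (q : Seminorm ℝ X) : Type _ := X

namespace SemiNormedOf
variable (q : Seminorm ℝ X)

instance : SeminormedAddCommGroup (SemiNormedOf q) :=
  q.toAddGroupSeminorm.toSeminormedAddCommGroup
instance : Module ℝ (SemiNormedOf q) := ‹Module ℝ X›
instance : NormedSpace ℝ (SemiNormedOf q) := ⟨fun r x => le_of_eq (map_smul_eq_mul q r x)⟩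

/-- identity as a linear map -/
def ofX : X →ₗ[ℝ] SemiNormedOf q := LinearMap.id (R := ℝ) (M := X)

@[simp] lemma norm_ofX (x : X) : ‖ofX q x‖ = q x := rfl

end SemiNormedOf

/-- Descend a continuous linear map along the separation quotient. -/
def descendCLM {E F : Type*} [SeminormedAddCommGroup E] [NormedSpace ℝ E]
    [NormedAddCommGroup F] [NormedSpace ℝ F] (l : E →L[ℝ] F) :
    SeparationQuotient E →L[ℝ] F where
  toFun := SeparationQuotient.lift l fun x y h => (h.map l.continuous).eq
  map_add' := fun x y => by
    obtain ⟨x, rfl⟩ := SeparationQuotient.surjective_mk x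
    obtain ⟨y, rfl⟩ := SeparationQuotient.surjective_mk y
    rw [← SeparationQuotient.mk_add, SeparationQuotient.lift_mk]
    exact map_add l x y
  map_smul' := fun c x => by
    obtain ⟨x, rfl⟩ := SeparationQuotient.surjective_mk x
    rw [← SeparationQuotient.mk_smul]
    show l (c • x) = (RingHom.id ℝ) c • l x
    simp
  cont := SeparationQuotient.continuous_lift_iff.mpr l.continuous

@[simp] lemma descendCLM_mk {E F : Type*} [SeminormedAddCommGroup E] [NormedSpace ℝ E]
    [NormedAddCommGroup F] [NormedSpace ℝ F] (l : E →L[ℝ] F) (x : E) :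
    descendCLM l (SeparationQuotient.mk x) = l x := rfl

/-- The local Banach space of the seminorm `q`. -/
abbrev CC (q : Seminorm ℝ X) : Type _ :=
  Completion (SeparationQuotient (SemiNormedOf q))

variable (q : Seminorm ℝ X)

/-- The canonical map `X → CC q`. -/
def toCC : X →ₗ[ℝ] CC q :=
  (((Completion.toComplₗᵢ (𝕜 := ℝ)).toLinearMap.comp
    (SeparationQuotient.mkCLM ℝ (SemiNormedOf q)).toLinearMap)).comp (SemiNormedOf.ofX q)

@[simp] lemma norm_toCC (x : X) : ‖toCC q x‖ = q x := by
  show ‖((SeparationQuotient.mk (SemiNormedOf.ofX q x) : SeparationQuotient (SemiNormedOf q)) :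
    CC q)‖ = q x
  rw [Completion.norm_coe, SeparationQuotient.norm_mk]
  rfl

lemma denseRange_toCC : DenseRange (toCC q) := by
  have h1 : DenseRange ((↑) : SeparationQuotient (SemiNormedOf q) → CC q) :=
    Completion.denseRange_coe
  have h2 : Function.Surjective
      (SeparationQuotient.mk : SemiNormedOf q → SeparationQuotient (SemiNormedOf q)) :=
    SeparationQuotient.surjective_mk
  exact h1.comp h2.denseRange (Completion.continuous_coe _)

variable {q} {q' : Seminorm ℝ X}

/-- The continuous linear map `SeparationQuotient (SemiNormedOf q) → CC q'` when `q' ≤ q`. -/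
def preconnect (h : ∀ x, q' x ≤ q x) : SeparationQuotient (SemiNormedOf q) →L[ℝ] CC q' :=
  descendCLM ((toCC q' : SemiNormedOf q →ₗ[ℝ] CC q').mkContinuous 1 (fun x => by
    rw [one_mul]
    show ‖toCC q' x‖ ≤ q x
    refine (norm_toCC q' x).le.trans ?_
    exact h x))

lemma norm_preconnect_le (h : ∀ x, q' x ≤ q x) : ‖preconnect h‖ ≤ 1 := by
  refine ContinuousLinearMap.opNorm_le_bound _ zero_le_one fun y => ?_
  obtain ⟨x, rfl⟩ := SeparationQuotient.surjective_mk y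
  rw [one_mul, SeparationQuotient.norm_mk]
  show ‖toCC q' x‖ ≤ ‖x‖
  refine (norm_toCC q' x).le.trans ?_
  exact h x

/-- The connecting map `CC q → CC q'` when `q' ≤ q`. -/
def connect (h : ∀ x, q' x ≤ q x) : CC q →L[ℝ] CC q' :=
  (preconnect h).extend Completion.toComplL

lemma connect_toCC (h : ∀ x, q' x ≤ q x) (x : X) : connect h (toCC q x) = toCC q' x := by
  have := ContinuousLinearMap.extend_eq (preconnect h) (e := Completion.toComplL)
    Completion.denseRange_coe (Completion.isUniformInducing_coe _)
    (SeparationQuotient.mk (SemiNormedOf.ofX q x))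
  exact this

lemma norm_connect_le (h : ∀ x, q' x ≤ q x) (c : CC q) : ‖connect h c‖ ≤ ‖c‖ := by
  have hb : ∀ y : SeparationQuotient (SemiNormedOf q),
      ‖y‖ ≤ (1 : ℝ≥0) * ‖Completion.toComplL (𝕜 := ℝ) y‖ := fun y => by
    rw [NNReal.coe_one, one_mul, Completion.coe_toComplL, Completion.norm_coe]
  have h1 : ‖connect h‖ ≤ (1 : ℝ≥0) * ‖preconnect h‖ :=
    ContinuousLinearMap.opNorm_extend_le (preconnect h) (e := Completion.toComplL)
      Completion.denseRange_coe hb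
  calc ‖connect h c‖ ≤ ‖connect h‖ * ‖c‖ := (connect h).le_opNorm c
    _ ≤ 1 * ‖c‖ := by
        refine mul_le_mul_of_nonneg_right ?_ (norm_nonneg _)
        refine h1.trans ?_
        rw [NNReal.coe_one, one_mul]
        exact norm_preconnect_le h
    _ = ‖c‖ := one_mul _

end AuxEmb

noncomputable section ShrinkEmb
open UniformSpace TopologicalSpace NNReal

variable {X : Type*} [AddCommGroup X] [Module ℝ X] (q : Seminorm ℝ X) [Small.{0} (CC q)]

instance : NormedAddCommGroup (Shrink.{0} (CC q)) :=
  inferInstance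

instance : NormedSpace ℝ (Shrink.{0} (CC q)) :=
  inferInstance

/-- The shrink equivalence as a linear isometry equivalence. -/
def shrinkLIE : Shrink.{0} (CC q) ≃ₗᵢ[ℝ] CC q :=
  ⟨Shrink.linearEquiv ℝ (CC q), fun _ => rfl⟩

instance : CompleteSpace (Shrink.{0} (CC q)) :=
  (shrinkLIE q).toIsometryEquiv.completeSpace

end ShrinkEmb


open UniformSpace TopologicalSpace NNReal

/-- Let `(Gₙ)` be Banach spaces and `πₙ : Gₙ₊₁ → Gₙ` nonexpansive linear operators with the
lifting property: every nonexpansive operator `T : B → Gₙ` from a separable Banach space `B`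
factors as `T = πₙ ∘ i` through an isometric embedding `i : B → Gₙ₊₁`.  Assume moreover every
separable Banach space embeds isometrically into `G₀`.  Then every separable Fréchet space `X`
with an increasing separating sequence of seminorms `(‖·‖ₙ)` admits a linear map
`f : X → ∏ₙ Gₙ` with `‖(f x)ₙ‖ = ‖x‖ₙ` and `πₙ((f x)ₙ₊₁) = (f x)ₙ` for all `n` and `x`;
in particular `f` is injective and preserves all seminorms. -/
theorem embedding_into_inverse_limit
    (G : ℕ → Type*) [∀ n, NormedAddCommGroup (G n)] [∀ n, NormedSpace ℝ (G n)]
    [∀ n, CompleteSpace (G n)]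
    (π : ∀ n : ℕ, G (n + 1) →L[ℝ] G n) (hπ : ∀ n, ‖π n‖ ≤ 1)
    -- lifting property of each `πₙ`:
    (hlift : ∀ (n : ℕ) (B : Type) [NormedAddCommGroup B] [NormedSpace ℝ B] [CompleteSpace B]
      [TopologicalSpace.SeparableSpace B] (T : B →L[ℝ] G n), ‖T‖ ≤ 1 →
      ∃ i : B →ₗ[ℝ] G (n + 1), (∀ b : B, ‖i b‖ = ‖b‖) ∧ ∀ b : B, T b = π n (i b))
    -- every separable Banach space embeds isometrically into `G₀`:
    (huniv : ∀ (B : Type) [NormedAddCommGroup B] [NormedSpace ℝ B] [CompleteSpace B]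
      [TopologicalSpace.SeparableSpace B],
      ∃ j : B →ₗ[ℝ] G 0, ∀ b : B, ‖j b‖ = ‖b‖)
    -- `X` a separable Fréchet space with an increasing separating sequence of seminorms:
    (X : Type*) [AddCommGroup X] [Module ℝ X] [UniformSpace X] [IsUniformAddGroup X]
    [CompleteSpace X] [TopologicalSpace.SeparableSpace X]
    (p : ℕ → Seminorm ℝ X) (hpmono : Monotone p)
    (hpsep : ∀ x : X, (∀ n : ℕ, p n x = 0) → x = 0)
    (hpws : WithSeminorms (𝕜 := ℝ) (E := X) p) :
    ∃ f : X →ₗ[ℝ] (∀ n, G n),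
      (∀ (n : ℕ) (x : X), ‖f x n‖ = p n x) ∧
      (∀ (n : ℕ) (x : X), π n (f x (n + 1)) = f x n) ∧
      Function.Injective f := by
  classical
  have hXunif := (SeminormFamily.withSeminorms_iff_uniformSpace_eq_iInf p).mp hpws
  have hle : ∀ n, ‹UniformSpace X› ≤ (PseudoMetricSpace.toUniformSpace :
      UniformSpace (SemiNormedOf (p n))) := fun n => le_trans hXunif.le (iInf_le _ n)
  have hcont : ∀ n, Continuous (SemiNormedOf.ofX (p n)) := fun n =>
    continuous_id_iff_le.mpr (UniformSpace.toTopologicalSpace_mono (hle n))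
  haveI hsepS : ∀ n, SeparableSpace (SemiNormedOf (p n)) := fun n =>
    (Function.Surjective.denseRange
      (fun x => ⟨x, rfl⟩ : Function.Surjective (SemiNormedOf.ofX (p n)))).separableSpace
      (hcont n)
  have hcontCC : ∀ n, Continuous (fun x : X => ((toCC (p n) x) : CC (p n))) := fun n =>
    (Completion.continuous_coe _).comp ((SeparationQuotient.continuous_mk).comp (hcont n))
  haveI hsepCC : ∀ n, SeparableSpace (CC (p n)) := fun n =>
    (denseRange_toCC (p n)).separableSpace (hcontCC n)
  haveI hsmall : ∀ n, Small.{0} (CC (p n)) := fun n =>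
    small_of_injective (kuratowskiEmbedding.isometry (CC (p n))).injective
  haveI hsepB : ∀ n, SeparableSpace (Shrink.{0} (CC (p n))) := fun n =>
    ((shrinkLIE (p n)).symm.surjective.denseRange).separableSpace
      (shrinkLIE (p n)).symm.continuous
  have hmn : ∀ n (x : X), p n x ≤ p (n + 1) x := fun n x => hpmono (Nat.le_succ n) x
  -- the canonical maps
  let κ : ∀ n, X →ₗ[ℝ] Shrink.{0} (CC (p n)) := fun n =>
    ((shrinkLIE (p n)).symm.toLinearEquiv.toLinearMap).comp (toCC (p n))
  have hκ : ∀ n x, ‖κ n x‖ = p n x := fun n x => by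
    show ‖(shrinkLIE (p n)).symm (toCC (p n) x)‖ = p n x
    rw [LinearIsometryEquiv.norm_map]
    exact norm_toCC _ x
  -- connecting maps
  let t : ∀ n, Shrink.{0} (CC (p (n + 1))) →ₗ[ℝ] Shrink.{0} (CC (p n)) := fun n =>
    (((shrinkLIE (p n)).symm.toLinearEquiv.toLinearMap).comp
      (connect (hmn n)).toLinearMap).comp (shrinkLIE (p (n + 1))).toLinearEquiv.toLinearMap
  have ht_norm : ∀ n b, ‖t n b‖ ≤ ‖b‖ := fun n b => by
    show ‖(shrinkLIE (p n)).symm (connect (hmn n) (shrinkLIE (p (n + 1)) b))‖ ≤ ‖b‖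
    rw [LinearIsometryEquiv.norm_map]
    calc ‖connect (hmn n) (shrinkLIE (p (n + 1)) b)‖ ≤ ‖shrinkLIE (p (n + 1)) b‖ :=
          norm_connect_le _ _
      _ = ‖b‖ := LinearIsometryEquiv.norm_map _ b
  have ht_κ : ∀ n x, t n (κ (n + 1) x) = κ n x := fun n x => by
    show (shrinkLIE (p n)).symm (connect (hmn n)
      (shrinkLIE (p (n + 1)) ((shrinkLIE (p (n + 1))).symm (toCC (p (n + 1)) x)))) =
      (shrinkLIE (p n)).symm (toCC (p n) x)
    rw [LinearIsometryEquiv.apply_symm_apply, connect_toCC]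
  -- inductive construction
  have step : ∀ n (jn : Shrink.{0} (CC (p n)) →ₗ[ℝ] G n), (∀ b, ‖jn b‖ = ‖b‖) →
      ∃ jn1 : Shrink.{0} (CC (p (n + 1))) →ₗ[ℝ] G (n + 1),
        (∀ b, ‖jn1 b‖ = ‖b‖) ∧ ∀ b, jn (t n b) = π n (jn1 b) := by
    intro n jn hjn
    have hb : ∀ b : Shrink.{0} (CC (p (n + 1))), ‖(jn.comp (t n)) b‖ ≤ 1 * ‖b‖ := by
      intro b
      rw [one_mul, LinearMap.comp_apply, hjn]
      exact ht_norm n b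
    let T : Shrink.{0} (CC (p (n + 1))) →L[ℝ] G n := (jn.comp (t n)).mkContinuous 1 hb
    have hT : ‖T‖ ≤ 1 := LinearMap.mkContinuous_norm_le _ zero_le_one _
    obtain ⟨i, hi1, hi2⟩ := hlift n (Shrink.{0} (CC (p (n + 1)))) T hT
    exact ⟨i, hi1, fun b => hi2 b⟩
  obtain ⟨j0, hj0⟩ := huniv (Shrink.{0} (CC (p 0)))
  let J : ∀ n, {j : Shrink.{0} (CC (p n)) →ₗ[ℝ] G n // ∀ b, ‖j b‖ = ‖b‖} := fun n =>
    Nat.rec ⟨j0, hj0⟩ (fun n prev => ⟨(step n prev.1 prev.2).choose,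
      (step n prev.1 prev.2).choose_spec.1⟩) n
  have hJcompat : ∀ n b, (J n).1 (t n b) = π n ((J (n + 1)).1 b) := fun n b =>
    (step n (J n).1 (J n).2).choose_spec.2 b
  refine ⟨LinearMap.pi (fun n => (J n).1.comp (κ n)), fun n x => ?_, fun n x => ?_, ?_⟩
  · show ‖(J n).1 (κ n x)‖ = p n x
    rw [(J n).2, hκ]
  · show π n ((J (n + 1)).1 (κ (n + 1) x)) = (J n).1 (κ n x)
    rw [← hJcompat n, ht_κ]
  · rw [injective_iff_map_eq_zero]
    intro x hx
    refine hpsep x fun n => ?_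
    have h0 : (LinearMap.pi (fun n => (J n).1.comp (κ n)) : X →ₗ[ℝ] ∀ n, G n) x n = 0 := by
      rw [hx]; rfl
    have hnz : ‖(J n).1 (κ n x)‖ = 0 := by
      show ‖(LinearMap.pi (fun n => (J n).1.comp (κ n)) : X →ₗ[ℝ] ∀ n, G n) x n‖ = 0
      rw [h0, norm_zero]
    rw [(J n).2, hκ] at hnz
    exact hnz
end

section
/- There exists a separable Fréchet space E with an increasing separating sequence of seminorms (‖·‖ᵢ)_{i∈ℕ} such that every separable Fréchet space X with an increasing sequence of seminorms (‖·‖ᵢ)_{i∈ℕ} generating its topology admits a linear map f : X → E with ‖f(x)‖ᵢ = ‖x‖ᵢ for all i ∈ ℕ and x ∈ X; i.e. E is isometrically universal for separable Fréchet spaces. -/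
/-- A bundled separable graded Fréchet space: a real vector space with an increasing separating
sequence of seminorms generating its (uniform) topology, complete and separable. -/
structure SepGradedFrechet where
  carrier : Type
  [acg : AddCommGroup carrier]
  [mod : Module ℝ carrier]
  [unif : UniformSpace carrier]
  [uag : IsUniformAddGroup carrier]
  seminorms : ℕ → Seminorm ℝ carrier
  mono : Monotone seminorms
  separating : ∀ x : carrier, (∀ i : ℕ, seminorms i x = 0) → x = 0
  withSeminorms : WithSeminorms (𝕜 := ℝ) (E := carrier) seminorms
  complete : CompleteSpace carrier
  separable : TopologicalSpace.SeparableSpace carrier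

attribute [instance] SepGradedFrechet.acg SepGradedFrechet.mod SepGradedFrechet.unif
  SepGradedFrechet.uag



open Filter Topology Metric Set Function TopologicalSpace

noncomputable section

/-- The fixed compact "universal Cantor-like" space. -/
abbrev UnivCantor : Type := ℕ → ℕ → Bool

namespace IsoUniv

/-- Capped first-true index. -/
def capFind (c : ℕ) (α : ℕ → Bool) : ℕ :=
  Nat.find (⟨c, Or.inl rfl⟩ : ∃ i, i = c ∨ α i = true)

lemma capFind_le (c : ℕ) (α : ℕ → Bool) : capFind c α ≤ c :=
  Nat.find_le (Or.inl rfl)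

lemma capFind_spec (c : ℕ) (α : ℕ → Bool) :
    (capFind c α = c ∨ α (capFind c α) = true) ∧ ∀ i < capFind c α, i ≠ c ∧ α i = false := by
  constructor
  · exact Nat.find_spec (⟨c, Or.inl rfl⟩ : ∃ i, i = c ∨ α i = true)
  · intro i hi
    have := Nat.find_min (⟨c, Or.inl rfl⟩ : ∃ i, i = c ∨ α i = true) hi
    push_neg at this
    exact ⟨this.1, Bool.eq_false_iff.mpr (by simpa using this.2)⟩

lemma capFind_eq_of (c j : ℕ) (α : ℕ → Bool) (hj : j ≤ c)
    (h1 : j = c ∨ α j = true) (h2 : ∀ i < j, α i = false) : capFind c α = j := by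
  rw [capFind, Nat.find_eq_iff]
  refine ⟨h1, fun i hi => ?_⟩
  push_neg
  exact ⟨fun hic => absurd hj (by omega), by simp [h2 i hi]⟩

lemma capFind_surjOn (c j : ℕ) (hj : j ≤ c) : ∃ α : ℕ → Bool, capFind c α = j := by
  refine ⟨fun i => decide (i = j), capFind_eq_of c j _ hj ?_ ?_⟩
  · rcases eq_or_lt_of_le hj with h | h
    · exact Or.inl h
    · exact Or.inr (by simp)
  · intro i hi; simp [Nat.ne_of_lt hi]

lemma capFind_depends (c : ℕ) (α β : ℕ → Bool) (h : ∀ i < c, α i = β i) :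
    capFind c α = capFind c β := by
  refine capFind_eq_of c (capFind c β) α (capFind_le c β) ?_ ?_
  · rcases (capFind_spec c β).1 with h1 | h1
    · exact Or.inl h1
    · rcases lt_or_eq_of_le (capFind_le c β) with hlt | heq
      · exact Or.inr ((h _ hlt).trans h1)
      · exact Or.inl heq
  · intro i hi
    have hic : i < c := lt_of_lt_of_le hi (capFind_le c β)
    rw [h i hic]
    exact ((capFind_spec c β).2 i hi).2

lemma continuous_capFind (c n : ℕ) :
    Continuous (fun κ : UnivCantor => capFind c (κ n)) := by
  have : (fun κ : UnivCantor => capFind c (κ n)) =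
      (fun v : Fin c → Bool => capFind c (fun i => if h : i < c then v ⟨i, h⟩ else false)) ∘
        (fun κ : UnivCantor => fun i : Fin c => κ n i.1) := by
    funext κ
    exact capFind_depends c _ _ (fun i hi => by simp [hi])
  rw [this]
  exact (continuous_of_discreteTopology).comp
    (continuous_pi fun i => (continuous_apply (i.1 : ℕ)).comp (continuous_apply n))

end IsoUniv
namespace IsoUniv

/-- Every nonempty compact metrizable space is a continuous image of `UnivCantor`. -/
theorem exists_continuous_surjective (M : Type) [TopologicalSpace M] [MetrizableSpace M]
    [CompactSpace M] [Nonempty M] :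
    ∃ f : UnivCantor → M, Continuous f ∧ Surjective f := by
  letI : MetricSpace M := TopologicalSpace.metrizableSpaceMetric M
  obtain ⟨y, hy⟩ := TopologicalSpace.exists_dense_seq M
  set ε : ℕ → ℝ := fun n => (1/2 : ℝ) ^ n with hε
  have hεpos : ∀ n, 0 < ε n := fun n => by positivity
  have hεhalf : ∀ n, ε (n + 1) = ε n / 2 := fun n => by
    simp [hε, pow_succ]; ring
  have hεlim : Tendsto ε atTop (𝓝 0) :=
    tendsto_pow_atTop_nhds_zero_of_lt_one (by norm_num) (by norm_num)
  -- finite covers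
  have cover : ∀ n : ℕ, ∃ c : ℕ, ∀ x : M, ∃ i ≤ c, dist x (y i) < ε n := by
    intro n
    have hcov : (univ : Set M) ⊆ ⋃ i, ball (y i) (ε n) := by
      intro x _
      obtain ⟨i, hi⟩ := Metric.denseRange_iff.mp hy x (ε n) (hεpos n)
      exact mem_iUnion.mpr ⟨i, by simpa [mem_ball, dist_comm] using hi⟩
    obtain ⟨t, ht⟩ := isCompact_univ.elim_finite_subcover _ (fun i => isOpen_ball) hcov
    refine ⟨t.sup id, fun x => ?_⟩
    obtain ⟨i, hit, hxi⟩ := mem_iUnion₂.mp (ht (mem_univ x))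
    exact ⟨i, Finset.le_sup (f := id) hit, by simpa [mem_ball] using hxi⟩
  choose c hc using cover
  -- the decoding map
  set dec : UnivCantor → ℕ → ℕ := fun κ n => capFind (c n) (κ n) with hdec
  have hdec_cont : ∀ n, Continuous (fun κ => dec κ n) := fun n => continuous_capFind (c n) n
  have hdec_le : ∀ κ n, dec κ n ≤ c n := fun κ n => capFind_le _ _
  have hdec_surj : ∀ σ : ℕ → ℕ, (∀ n, σ n ≤ c n) → ∃ κ, ∀ n, dec κ n = σ n := by
    intro σ hσ
    have := fun n => capFind_surjOn (c n) (σ n) (hσ n)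
    choose α hα using this
    exact ⟨fun n => α n, fun n => hα n⟩
  -- the scheme
  classical
  set z : (ℕ → ℕ) → ℕ → M := fun σ => Nat.rec (y (σ 0))
    (fun n zn => if dist (y (σ (n + 1))) zn ≤ ε n + ε (n + 1) then y (σ (n + 1)) else zn) with hz
  have hzsucc : ∀ σ n, z σ (n + 1) =
      if dist (y (σ (n + 1))) (z σ n) ≤ ε n + ε (n + 1) then y (σ (n + 1)) else z σ n :=
    fun σ n => rfl
  have hzstep : ∀ σ n, dist (z σ n) (z σ (n + 1)) ≤ ε n + ε (n + 1) := by
    intro σ n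
    rw [hzsucc]
    split
    · rw [dist_comm]; assumption
    · simp [dist_self]
      positivity
  -- Cauchy and limits
  have hzcauchy : ∀ σ, CauchySeq (z σ) := by
    intro σ
    refine cauchySeq_of_dist_le_of_summable (fun n => ε n + ε (n + 1)) (fun n => hzstep σ n) ?_
    refine Summable.add ?_ ?_
    · exact summable_geometric_of_lt_one (by norm_num) (by norm_num)
    · exact (summable_nat_add_iff 1).mpr (summable_geometric_of_lt_one (by norm_num) (by norm_num))
  have hzlim : ∀ σ, ∃ L, Tendsto (z σ) atTop (𝓝 L) :=
    fun σ => cauchySeq_tendsto_of_complete (hzcauchy σ)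
  choose flim hflim using hzlim
  -- distance to chunks
  have hchunk : ∀ σ n k, dist (z σ n) (z σ (n + k)) ≤ 3 * ε n * (1 - (1/2 : ℝ) ^ k) := by
    intro σ n k
    induction k with
    | zero => simp
    | succ k ih =>
      have h1 : dist (z σ n) (z σ (n + k + 1)) ≤
          dist (z σ n) (z σ (n + k)) + (ε (n + k) + ε (n + k + 1)) :=
        (dist_triangle _ _ _).trans (by gcongr; exact hzstep σ (n + k))
      have h2 : ε (n + k) = ε n * (1/2 : ℝ) ^ k := by
        simp only [hε]; rw [pow_add]
      have h3 : ε (n + k + 1) = ε n * (1/2 : ℝ) ^ k / 2 := by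
        rw [hεhalf (n + k), h2]
      have hεn := hεpos n
      have hp : (0:ℝ) < (1/2 : ℝ) ^ k := by positivity
      calc dist (z σ n) (z σ (n + k + 1)) ≤
          3 * ε n * (1 - (1/2 : ℝ) ^ k) + (ε n * (1/2:ℝ)^k + ε n * (1/2:ℝ)^k / 2) := by
            rw [← h3, ← h2]; exact h1.trans (by gcongr)
        _ ≤ 3 * ε n * (1 - (1/2 : ℝ) ^ (k + 1)) := by
            rw [pow_succ]; nlinarith
  have htail : ∀ σ n, dist (z σ n) (flim σ) ≤ 3 * ε n := by
    intro σ n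
    have h0 : Tendsto (fun k => z σ (n + k)) atTop (𝓝 (flim σ)) := by
      have := (hflim σ).comp (tendsto_add_atTop_nat n)
      simpa [Function.comp_def, Nat.add_comm] using this
    have h1 : Tendsto (fun k => dist (z σ n) (z σ (n + k))) atTop (𝓝 (dist (z σ n) (flim σ))) :=
      (Continuous.tendsto (continuous_const.dist continuous_id) (flim σ)).comp h0
    refine le_of_tendsto h1 (Eventually.of_forall fun k => ?_)
    refine (hchunk σ n k).trans ?_
    have hεn := (hεpos n).le
    have hp : (0:ℝ) ≤ (1/2 : ℝ) ^ k := by positivity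
    nlinarith
  -- prefix determinism
  have hprefix : ∀ σ σ' : ℕ → ℕ, ∀ n, (∀ i ≤ n, σ i = σ' i) → z σ n = z σ' n := by
    intro σ σ' n
    induction n with
    | zero => intro h; simp [hz, h 0 le_rfl]
    | succ n ih =>
      intro h
      have hn := ih (fun i hi => h i (hi.trans (Nat.le_succ n)))
      rw [hzsucc, hzsucc, hn, h (n+1) le_rfl]
  refine ⟨flim ∘ dec, ?_, ?_⟩
  · -- continuity
    rw [continuous_iff_continuousAt]
    intro κ
    rw [ContinuousAt, Metric.tendsto_nhds]
    intro δ hδ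
    obtain ⟨n, hn⟩ : ∃ n, 6 * ε n < δ := by
      have : Tendsto (fun n => 6 * ε n) atTop (𝓝 (6 * 0)) := hεlim.const_mul 6
      rw [mul_zero] at this
      exact ((this.eventually (gt_mem_nhds hδ)).exists)
    have hU : ∀ᶠ κ' in 𝓝 κ, ∀ i ≤ n, dec κ' i = dec κ i := by
      have : ∀ i, ∀ᶠ κ' in 𝓝 κ, dec κ' i = dec κ i := by
        intro i
        have : IsOpen {κ' : UnivCantor | dec κ' i = dec κ i} :=
          IsOpen.preimage (hdec_cont i) (isOpen_discrete {dec κ i})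
        exact this.mem_nhds rfl
      have h2 : ∀ᶠ κ' in 𝓝 κ, ∀ i ∈ Finset.range (n+1), dec κ' i = dec κ i :=
        (Finset.range (n+1)).eventually_all.mpr (fun i _ => this i)
      filter_upwards [h2] with κ' h i hi
      exact h i (Finset.mem_range.mpr (Nat.lt_succ_of_le hi))
    filter_upwards [hU] with κ' h
    have hzz : z (dec κ') n = z (dec κ) n := hprefix _ _ n h
    calc dist ((flim ∘ dec) κ') ((flim ∘ dec) κ)
        ≤ dist (flim (dec κ')) (z (dec κ') n) + dist (z (dec κ) n) (flim (dec κ)) := by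
          have := dist_triangle (flim (dec κ')) (z (dec κ') n) (flim (dec κ))
          rw [hzz] at this ⊢
          simpa using this
      _ ≤ 3 * ε n + 3 * ε n := by
          rw [dist_comm (flim (dec κ')) _]
          exact add_le_add (htail _ n) (htail _ n)
      _ < δ := by linarith
  · -- surjectivity
    intro x
    have := fun n => hc n x
    choose σ hσle hσdist using this
    have hzx : ∀ n, dist (z σ n) x < ε n := by
      intro n
      induction n with
      | zero => simpa [hz, dist_comm] using hσdist 0
      | succ n ih =>
        have hcond : dist (y (σ (n + 1))) (z σ n) ≤ ε n + ε (n + 1) := by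
          calc dist (y (σ (n + 1))) (z σ n) ≤ dist (y (σ (n + 1))) x + dist x (z σ n) :=
                dist_triangle _ _ _
            _ ≤ ε (n + 1) + ε n := by
                refine add_le_add (by rw [dist_comm]; exact (hσdist (n+1)).le) ?_
                rw [dist_comm]; exact ih.le
            _ = ε n + ε (n + 1) := by ring
        rw [hzsucc, if_pos hcond, dist_comm]
        exact hσdist (n + 1)
    have hxlim : Tendsto (z σ) atTop (𝓝 x) := by
      rw [tendsto_iff_dist_tendsto_zero]
      exact squeeze_zero (fun n => dist_nonneg) (fun n => (hzx n).le) hεlim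
    obtain ⟨κ, hκ⟩ := hdec_surj σ hσle
    refine ⟨κ, ?_⟩
    have : dec κ = σ := funext hκ
    simp only [comp_apply, this]
    exact tendsto_nhds_unique (hflim σ) hxlim

end IsoUniv

namespace IsoUniv

variable {X : Type} [AddCommGroup X] [Module ℝ X]

/-- Hahn–Banach: norming functionals at the points of a sequence. -/
theorem exists_norming_functionals (q : Seminorm ℝ X) (x_ : ℕ → X) :
    ∃ g : ℕ → X →ₗ[ℝ] ℝ, (∀ k y, |g k y| ≤ q y) ∧ (∀ k, g k (x_ k) = q (x_ k)) := by
  have H : ∀ k, ∃ g : X →ₗ[ℝ] ℝ, (∀ y, |g y| ≤ q y) ∧ g (x_ k) = q (x_ k) := by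
    intro k
    by_cases h0 : x_ k = 0
    · exact ⟨0, fun y => by simp only [LinearMap.zero_apply, abs_zero]; exact apply_nonneg q y, by simp [h0]⟩
    · set f := LinearPMap.mkSpanSingleton (K := ℝ) (L := ℝ) (σ := RingHom.id ℝ) (x_ k) (q (x_ k)) h0 with hf
      have hdom : ∀ z : f.domain, (f z : ℝ) ≤ q z := by
        rintro ⟨v, hv⟩
        rcases Submodule.mem_span_singleton.1 hv with ⟨c, rfl⟩
        have happ : f ⟨c • x_ k, hv⟩ = c • q (x_ k) :=
          LinearPMap.mkSpanSingleton'_apply _ _ _ c _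
        rw [happ]
        rcases le_or_gt 0 c with hc | hc
        · rw [map_smul_eq_mul, Real.norm_eq_abs, abs_of_nonneg hc, smul_eq_mul]
        · have h1 : c • q (x_ k) ≤ 0 := by
            rw [smul_eq_mul]
            exact mul_nonpos_of_nonpos_of_nonneg hc.le (apply_nonneg q _)
          exact h1.trans (apply_nonneg q _)
      obtain ⟨g, hg1, hg2⟩ := exists_extension_of_le_sublinear f q
        (fun c hc y => by rw [map_smul_eq_mul, Real.norm_eq_abs, abs_of_pos hc])
        (fun y z => map_add_le_add q y z) hdom
      refine ⟨g, fun y => ?_, ?_⟩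
      · rw [abs_le]
        refine ⟨?_, hg2 y⟩
        have h1 := hg2 (-y)
        rw [map_neg, map_neg_eq_map] at h1
        linarith
      · have hm : x_ k ∈ f.domain := by
          rw [hf, LinearPMap.domain_mkSpanSingleton]
          exact Submodule.mem_span_singleton_self _
        have h2 := hg1 ⟨x_ k, hm⟩
        rw [h2]
        exact LinearPMap.mkSpanSingleton_apply ℝ ℝ h0 (q (x_ k))
  choose g hg1 hg2 using H
  exact ⟨g, hg1, hg2⟩

/-- The single-seminorm isometric embedding into `C(UnivCantor, ℝ)`. -/
theorem exists_isometric_component (q : Seminorm ℝ X) (x_ : ℕ → X)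
    (hx : ∀ y : X, ∀ ε : ℝ, 0 < ε → ∃ k, q (y - x_ k) < ε) :
    ∃ F : X →ₗ[ℝ] C(UnivCantor, ℝ), ∀ y, ‖F y‖ = q y := by
  obtain ⟨g, hg1, hg2⟩ := exists_norming_functionals q x_
  have hgd : ∀ k (y z : X), |g k y - g k z| ≤ q (y - z) := by
    intro k y z
    have h := hg1 k (y - z)
    rwa [map_sub] at h
  -- norming property of the family
  have hsup : ∀ y : X, ∀ ε : ℝ, 0 < ε → ∃ k, q y - ε < |g k y| := by
    intro y ε hε
    obtain ⟨k, hk⟩ := hx y (ε/2) (by positivity)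
    refine ⟨k, ?_⟩
    have hA : q y ≤ q (x_ k) + q (y - x_ k) := by
      have := map_add_le_add q (x_ k) (y - x_ k)
      simpa using this
    have hB : q (x_ k) ≤ q (x_ k - y) + |g k y| := by
      have h1 : q (x_ k) = g k (x_ k) := (hg2 k).symm
      have h2 : g k (x_ k) ≤ |g k (x_ k)| := le_abs_self _
      have h3 : |g k (x_ k)| ≤ |g k (x_ k) - g k y| + |g k y| := by
        calc |g k (x_ k)| = |(g k (x_ k) - g k y) + g k y| := by ring_nf
          _ ≤ |g k (x_ k) - g k y| + |g k y| := abs_add_le _ _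
      have h4 := hgd k (x_ k) y
      linarith
    have hC : q (x_ k - y) = q (y - x_ k) := by rw [← neg_sub, map_neg_eq_map]
    linarith
  -- the ambient compact set
  set Θ : (X →ₗ[ℝ] ℝ) → (ℕ → ℝ) := fun h => fun k => h (x_ k) with hΘ
  set KK : Set (ℕ → ℝ) := closure (Set.range (fun k => Θ (g k))) with hKK
  have hKKne : KK.Nonempty := ⟨Θ (g 0), subset_closure (Set.mem_range_self 0)⟩
  have hKKcomp : IsCompact KK := by
    have hcomp : IsCompact (Set.univ.pi fun k => Set.Icc (-(q (x_ k))) (q (x_ k))) :=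
      isCompact_univ_pi fun k => isCompact_Icc
    refine hcomp.of_isClosed_subset isClosed_closure (closure_minimal ?_ hcomp.isClosed)
    rintro v ⟨k, rfl⟩
    intro j _
    exact Set.mem_Icc.mpr (abs_le.mp (hg1 k (x_ j)))
  -- sequences converging to points of KK
  have hseq : ∀ κ ∈ KK, ∃ a : ℕ → ℕ, Tendsto (fun n => Θ (g (a n))) atTop (𝓝 κ) := by
    intro κ hκ
    obtain ⟨u, hu1, hu2⟩ := mem_closure_iff_seq_limit.mp hκ
    choose a ha using hu1
    refine ⟨a, ?_⟩
    have : (fun n => Θ (g (a n))) = u := funext ha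
    rw [this]; exact hu2
  -- Cauchy along such sequences
  have hCauchy : ∀ (a : ℕ → ℕ) (κ : ℕ → ℝ), Tendsto (fun n => Θ (g (a n))) atTop (𝓝 κ) →
      ∀ y : X, ∃ L : ℝ, Tendsto (fun n => g (a n) y) atTop (𝓝 L) := by
    intro a κ hκ y
    apply cauchySeq_tendsto_of_complete
    rw [Metric.cauchySeq_iff]
    intro ε hε
    obtain ⟨k, hk⟩ := hx y (ε/3) (by positivity)
    have hco : CauchySeq (fun n => Θ (g (a n)) k) :=
      (((continuous_apply k).tendsto κ).comp hκ).cauchySeq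
    rw [Metric.cauchySeq_iff] at hco
    obtain ⟨N, hN⟩ := hco (ε/3) (by positivity)
    refine ⟨N, fun m hm n hn => ?_⟩
    have e1 := hgd (a m) y (x_ k)
    have e2 := hgd (a n) y (x_ k)
    have e3 := hN m hm n hn
    rw [Real.dist_eq] at e3 ⊢
    have hrw : g (a m) y - g (a n) y = (g (a m) y - g (a m) (x_ k)) +
        (Θ (g (a m)) k - Θ (g (a n)) k) + (g (a n) (x_ k) - g (a n) y) := by
      simp only [hΘ]; ring
    rw [hrw]
    calc |_ + _ + (g (a n) (x_ k) - g (a n) y)| ≤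
        |(g (a m) y - g (a m) (x_ k)) + (Θ (g (a m)) k - Θ (g (a n)) k)| +
          |g (a n) (x_ k) - g (a n) y| := abs_add_le _ _
      _ ≤ |g (a m) y - g (a m) (x_ k)| + |Θ (g (a m)) k - Θ (g (a n)) k| +
          |g (a n) (x_ k) - g (a n) y| := by gcongr; exact abs_add_le _ _
      _ < ε := by
          have e2' : |g (a n) (x_ k) - g (a n) y| ≤ q (y - x_ k) := by
            rw [abs_sub_comm]; exact e2
          linarith
  -- the limit functional, with its universal property
  have hGex : ∀ κ : {v : ℕ → ℝ // v ∈ KK}, ∃ ℓ : X →ₗ[ℝ] ℝ,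
      (∀ (y : X) (k : ℕ), |ℓ y - κ.1 k| ≤ q (y - x_ k)) ∧
      (∀ (b : ℕ → ℕ), Tendsto (fun n => Θ (g (b n))) atTop (𝓝 κ.1) →
        ∀ y, Tendsto (fun n => g (b n) y) atTop (𝓝 (ℓ y))) := by
    rintro ⟨κ, hκ⟩
    obtain ⟨a, ha⟩ := hseq κ hκ
    choose L hL using hCauchy a κ ha
    have hadd : ∀ y z, L (y + z) = L y + L z := by
      intro y z
      refine tendsto_nhds_unique (hL (y + z)) ?_
      have := (hL y).add (hL z)
      simpa [map_add] using this
    have hsmul : ∀ (c : ℝ) (y : X), L (c • y) = c * L y := by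
      intro c y
      refine tendsto_nhds_unique (hL (c • y)) ?_
      have := (hL y).const_mul c
      simpa [map_smul, smul_eq_mul] using this
    set ℓ : X →ₗ[ℝ] ℝ :=
      { toFun := L
        map_add' := hadd
        map_smul' := fun c y => by simpa [smul_eq_mul] using hsmul c y } with hℓ
    have hℓapp : ∀ y, ℓ y = L y := fun y => rfl
    have hLκ : ∀ (y : X) (k : ℕ), |L y - κ k| ≤ q (y - x_ k) := by
      intro y k
      have hcoord : Tendsto (fun n => Θ (g (a n)) k) atTop (𝓝 (κ k)) :=
        ((continuous_apply k).tendsto κ).comp ha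
      have h1 : Tendsto (fun n => |g (a n) y - Θ (g (a n)) k|) atTop (𝓝 |L y - κ k|) :=
        ((hL y).sub hcoord).abs
      refine le_of_tendsto h1 (Eventually.of_forall fun n => ?_)
      simpa [hΘ] using hgd (a n) y (x_ k)
    refine ⟨ℓ, fun y k => by rw [hℓapp]; exact hLκ y k, ?_⟩
    intro b hb y
    rw [Metric.tendsto_atTop]
    intro ε hε
    obtain ⟨k, hk⟩ := hx y (ε/4) (by positivity)
    have hcoordb : Tendsto (fun n => Θ (g (b n)) k) atTop (𝓝 (κ k)) :=
      ((continuous_apply k).tendsto κ).comp hb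
    rw [Metric.tendsto_atTop] at hcoordb
    obtain ⟨N, hN⟩ := hcoordb (ε/4) (by positivity)
    refine ⟨N, fun n hn => ?_⟩
    have e1 := hgd (b n) y (x_ k)
    have e2 := hN n hn
    rw [Real.dist_eq] at e2 ⊢
    have e3 := hLκ y k
    rw [hℓapp]
    have hrw : g (b n) y - L y = (g (b n) y - g (b n) (x_ k)) +
        (Θ (g (b n)) k - κ k) + (κ k - L y) := by
      simp only [hΘ]; ring
    rw [hrw]
    have e3' : |κ k - L y| ≤ q (y - x_ k) := by rw [abs_sub_comm]; exact e3
    calc |_ + _ + (κ k - L y)| ≤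
        |(g (b n) y - g (b n) (x_ k)) + (Θ (g (b n)) k - κ k)| + |κ k - L y| := abs_add_le _ _
      _ ≤ |g (b n) y - g (b n) (x_ k)| + |Θ (g (b n)) k - κ k| + |κ k - L y| := by
          gcongr; exact abs_add_le _ _
      _ < ε := by linarith
  choose G hG1 hG2 using hGex
  -- boundedness
  have hGb : ∀ (κ : {v : ℕ → ℝ // v ∈ KK}) (y : X), |G κ y| ≤ q y := by
    intro κ y
    obtain ⟨a, ha⟩ := hseq κ.1 κ.2
    have := (hG2 κ a ha y).abs
    exact le_of_tendsto this (Eventually.of_forall fun n => hg1 (a n) y)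
  -- continuity in κ
  have hGcont : ∀ y : X, Continuous (fun κ : {v : ℕ → ℝ // v ∈ KK} => G κ y) := by
    intro y
    rw [continuous_iff_continuousAt]
    intro κ0
    rw [ContinuousAt, Metric.tendsto_nhds]
    intro ε hε
    obtain ⟨k, hk⟩ := hx y (ε/3) (by positivity)
    have hcon : Continuous (fun κ : {v : ℕ → ℝ // v ∈ KK} => κ.1 k) :=
      (continuous_apply k).comp continuous_subtype_val
    have hev : ∀ᶠ κ in 𝓝 κ0, dist (κ.1 k) (κ0.1 k) < ε/3 :=
      Metric.tendsto_nhds.mp hcon.continuousAt (ε/3) (by positivity)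
    filter_upwards [hev] with κ hκ
    rw [Real.dist_eq] at hκ ⊢
    have e1 := hG1 κ y k
    have e2 := hG1 κ0 y k
    have hrw : G κ y - G κ0 y = (G κ y - κ.1 k) + (κ.1 k - κ0.1 k) + (κ0.1 k - G κ0 y) := by ring
    rw [hrw]
    have e2' : |κ0.1 k - G κ0 y| ≤ q (y - x_ k) := by rw [abs_sub_comm]; exact e2
    calc |_ + _ + (κ0.1 k - G κ0 y)| ≤
        |(G κ y - κ.1 k) + (κ.1 k - κ0.1 k)| + |κ0.1 k - G κ0 y| := abs_add_le _ _
      _ ≤ |G κ y - κ.1 k| + |κ.1 k - κ0.1 k| + |κ0.1 k - G κ0 y| := by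
          gcongr; exact abs_add_le _ _
      _ < ε := by linarith
  -- attainment
  have hGnorm : ∀ y : X, ∃ κ : {v : ℕ → ℝ // v ∈ KK}, |G κ y| = q y := by
    intro y
    have hchoice : ∀ n : ℕ, ∃ k, q y - 1/(n+1) < |g k y| :=
      fun n => hsup y (1/(n+1)) (by positivity)
    choose a ha using hchoice
    have hmem : ∀ n, Θ (g (a n)) ∈ KK := fun n => subset_closure (Set.mem_range_self _)
    obtain ⟨κ, hκKK, φ, hφ, hconv⟩ := hKKcomp.tendsto_subseq hmem
    refine ⟨⟨κ, hκKK⟩, ?_⟩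
    have hten : Tendsto (fun n => g (a (φ n)) y) atTop (𝓝 (G ⟨κ, hκKK⟩ y)) :=
      hG2 ⟨κ, hκKK⟩ (a ∘ φ) hconv y
    have hlow : Tendsto (fun n : ℕ => q y - 1/((φ n : ℝ)+1)) atTop (𝓝 (q y)) := by
      have h1 : Tendsto (fun n : ℕ => (1:ℝ)/((n : ℝ)+1)) atTop (𝓝 0) :=
        tendsto_one_div_add_atTop_nhds_zero_nat
      have h2 : Tendsto (fun n : ℕ => (1:ℝ)/((φ n : ℝ)+1)) atTop (𝓝 0) :=
        h1.comp hφ.tendsto_atTop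
      simpa using tendsto_const_nhds.sub h2
    have habs : Tendsto (fun n => |g (a (φ n)) y|) atTop (𝓝 |G ⟨κ, hκKK⟩ y|) := hten.abs
    have hsq : Tendsto (fun n => |g (a (φ n)) y|) atTop (𝓝 (q y)) := by
      refine tendsto_of_tendsto_of_tendsto_of_le_of_le hlow tendsto_const_nhds
        (fun n => (ha (φ n)).le) (fun n => hg1 _ y)
    exact tendsto_nhds_unique habs hsq
  -- Cantor parametrization
  haveI : CompactSpace {v : ℕ → ℝ // v ∈ KK} := isCompact_iff_compactSpace.mp hKKcomp
  haveI : Nonempty {v : ℕ → ℝ // v ∈ KK} := hKKne.to_subtype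
  obtain ⟨f, hfc, hfs⟩ := exists_continuous_surjective {v : ℕ → ℝ // v ∈ KK}
  refine ⟨{ toFun := fun y => ⟨fun α => G (f α) y, (hGcont y).comp hfc⟩
            map_add' := ?_
            map_smul' := ?_ }, ?_⟩
  · intro y z; ext α; simp [map_add]
  · intro c y; ext α; simp [map_smul]
  · intro y
    refine le_antisymm ?_ ?_
    · rw [ContinuousMap.norm_le _ (apply_nonneg q y)]
      intro α
      simpa [Real.norm_eq_abs] using hGb (f α) y
    · obtain ⟨κ, hκ⟩ := hGnorm y
      obtain ⟨α, hα⟩ := hfs κ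
      have h1 : q y = ‖(⟨fun α => G (f α) y, (hGcont y).comp hfc⟩ : C(UnivCantor, ℝ)) α‖ := by
        simp only [ContinuousMap.coe_mk, Real.norm_eq_abs, hα, hκ]
      rw [h1]
      exact ContinuousMap.norm_coe_le_norm _ α

end IsoUniv

namespace IsoUniv

/-- The universal space. -/
abbrev ESpace : Type := ℕ → C(UnivCantor, ℝ)

/-- The coordinate norm seminorms on `ESpace`. -/
noncomputable def Pfam : SeminormFamily ℝ ESpace ℕ :=
  fun j => (normSeminorm ℝ C(UnivCantor, ℝ)).comp (LinearMap.proj j)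

/-- The increasing seminorms on `ESpace`. -/
noncomputable def Qfam : SeminormFamily ℝ ESpace ℕ :=
  fun i => (Finset.Iic i).sup Pfam

lemma Pfam_apply (j : ℕ) (v : ESpace) : Pfam j v = ‖v j‖ := rfl

lemma withSeminorms_Pfam : WithSeminorms Pfam := by
  have hp : ∀ i : ℕ, WithSeminorms (fun _ : Fin 1 => normSeminorm ℝ C(UnivCantor, ℝ)) :=
    fun i => norm_withSeminorms ℝ _
  have h := withSeminorms_pi (𝕜 := ℝ) (E := fun _ : ℕ => C(UnivCantor, ℝ))
    (κ := fun _ : ℕ => Fin 1) hp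
  exact h.congr_equiv (Equiv.sigmaUnique ℕ (fun _ => Fin 1)).symm

lemma withSeminorms_Qfam : WithSeminorms Qfam := withSeminorms_Pfam.partial_sups

lemma Qfam_mono : Monotone Qfam := by
  intro i j hij
  exact Finset.sup_mono (Finset.Iic_subset_Iic.mpr hij)

lemma Qfam_separating : ∀ v : ESpace, (∀ i : ℕ, Qfam i v = 0) → v = 0 := by
  intro v hv
  funext j
  have h1 : Pfam j v ≤ Qfam j v :=
    Seminorm.le_finset_sup_apply (Finset.mem_Iic.mpr le_rfl)
  rw [hv j] at h1
  have h2 : ‖v j‖ = 0 := le_antisymm (by simpa [Pfam_apply] using h1) (norm_nonneg _)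
  simpa using norm_eq_zero.mp h2

/-- The universal separable graded Fréchet space. -/
noncomputable def Euniv : SepGradedFrechet where
  carrier := ESpace
  seminorms := Qfam
  mono := Qfam_mono
  separating := Qfam_separating
  withSeminorms := withSeminorms_Qfam
  complete := inferInstance
  separable := inferInstance

end IsoUniv

/-- There exists a separable Fréchet space `E` with an increasing separating sequence of
seminorms such that every separable Fréchet space `X` with an increasing sequence of seminorms
generating its topology admits a linear map `f : X → E` preserving all seminorms; i.e. `E` is
isometrically universal for separable Fréchet spaces. -/
theorem exists_isometrically_universal_separable_frechet :
    ∃ E : SepGradedFrechet,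
      ∀ (X : Type) [AddCommGroup X] [Module ℝ X] [UniformSpace X] [IsUniformAddGroup X]
        [CompleteSpace X] [TopologicalSpace.SeparableSpace X]
        (p : ℕ → Seminorm ℝ X), Monotone p → (∀ x : X, (∀ i : ℕ, p i x = 0) → x = 0) →
        WithSeminorms (𝕜 := ℝ) (E := X) p →
        ∃ f : X →ₗ[ℝ] E.carrier, ∀ (i : ℕ) (x : X), E.seminorms i (f x) = p i x := by
  classical
  refine ⟨IsoUniv.Euniv, ?_⟩
  intro X _ _ _ _ _ _ p hmono _hsep hwp
  haveI : Nonempty X := ⟨0⟩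
  obtain ⟨u, hu⟩ := TopologicalSpace.exists_dense_seq X
  have hx : ∀ i : ℕ, ∀ y : X, ∀ ε : ℝ, 0 < ε → ∃ k, p i (y - u k) < ε := by
    intro i y ε hε
    have hconti : Continuous (p i) := hwp.continuous_seminorm i
    have ho : IsOpen {z : X | p i (y - z) < ε} := by
      have : Continuous (fun z : X => p i (y - z)) :=
        hconti.comp (continuous_const.sub continuous_id)
      exact isOpen_lt this continuous_const
    have hne : {z : X | p i (y - z) < ε}.Nonempty := ⟨y, by simpa using hε⟩
    obtain ⟨k, hk⟩ := hu.exists_mem_open ho hne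
    exact ⟨k, hk⟩
  have hF : ∀ i : ℕ, ∃ F : X →ₗ[ℝ] C(UnivCantor, ℝ), ∀ y, ‖F y‖ = p i y :=
    fun i => IsoUniv.exists_isometric_component (p i) u (hx i)
  choose F hFnorm using hF
  refine ⟨LinearMap.pi F, ?_⟩
  intro i x
  show IsoUniv.Qfam i (LinearMap.pi F x) = p i x
  have hPlem : ∀ j, IsoUniv.Pfam j (LinearMap.pi F x) = p j x := by
    intro j
    rw [IsoUniv.Pfam_apply]
    exact hFnorm j x
  refine le_antisymm ?_ ?_
  · refine Seminorm.finset_sup_apply_le (apply_nonneg _ _) (fun j hj => ?_)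
    rw [hPlem j]
    exact hmono (Finset.mem_Iic.mp hj) x
  · rw [← hPlem i]
    exact Seminorm.le_finset_sup_apply (Finset.mem_Iic.mpr le_rfl)
end
end

section
/- There is no separable Fréchet space of universal disposition for finite-dimensional graded Fréchet spaces: for every separable Fréchet space E with an increasing separating sequence of seminorms there exist finite-dimensional graded Fréchet spaces X ⊆ Y (X a subspace of Y with the restricted seminorms) and an isometric embedding f₀ : X → E such that no isometric embedding f : Y → E satisfies f ↾ X = f₀. -/
section Aux

variable {E : Type*} [AddCommGroup E] [Module ℝ E] [TopologicalSpace E]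
  [ContinuousAdd E] [ContinuousSMul ℝ E]

/-- Near every point there is a point at which the seminorm `p` is "almost flat" in the
direction `w`: some symmetric second difference is `< t`. Proved by pigeonhole on a grid. -/
theorem aux_dense_flat (p : Seminorm ℝ E) (hp : Continuous p) (w : E) :
    Dense {x : E | ∃ t : ℝ, 0 < t ∧ p (x + t • w) + p (x - t • w) - 2 * p x < t} := by
  rw [dense_iff_inter_open]
  rintro U hU ⟨x₀, hx₀⟩
  have hc : Continuous fun s : ℝ => x₀ + s • w :=
    continuous_const.add (continuous_id.smul continuous_const)
  have hmem : (fun s : ℝ => x₀ + s • w) ⁻¹' U ∈ nhds (0 : ℝ) := by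
    apply hc.continuousAt.preimage_mem_nhds
    simpa using hU.mem_nhds hx₀
  obtain ⟨σ, hσ, hball⟩ := Metric.mem_nhds_iff.mp hmem
  set P := p w with hP
  have hPnn : 0 ≤ P := apply_nonneg p w
  set M : ℕ := ⌊2 * P⌋₊ + 1 with hM
  have hM1 : 1 ≤ M := Nat.le_add_left 1 _
  set δ : ℝ := σ / (2 * (M + 1)) with hδ
  have hδpos : 0 < δ := by positivity
  have hdiff : ∀ a b : E, p a - p b ≤ p (a - b) := by
    intro a b
    have h := map_add_le_add p (a - b) b
    have e : a - b + b = a := by abel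
    rw [e] at h
    linarith
  have harg : ∀ s : ℝ, (x₀ + (s + δ) • w) - (x₀ + s • w) = δ • w := by
    intro s
    module
  have hFstep : ∀ s : ℝ, |p (x₀ + (s + δ) • w) - p (x₀ + s • w)| ≤ δ * P := by
    intro s
    rw [abs_le]
    constructor
    · have h1 := hdiff (x₀ + s • w) (x₀ + (s + δ) • w)
      rw [← neg_sub (x₀ + (s + δ) • w), harg s, map_neg_eq_map, map_smul_eq_mul,
        Real.norm_eq_abs, abs_of_pos hδpos] at h1
      linarith
    · have h1 := hdiff (x₀ + (s + δ) • w) (x₀ + s • w)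
      rw [harg s, map_smul_eq_mul, Real.norm_eq_abs, abs_of_pos hδpos] at h1
      linarith
  set h : ℕ → ℝ :=
    fun k => p (x₀ + (((k : ℝ) + 1) * δ) • w) - p (x₀ + ((k : ℝ) * δ) • w) with hh
  have hhbd : ∀ k : ℕ, |h k| ≤ δ * P := by
    intro k
    have e : ((k : ℝ) + 1) * δ = (k : ℝ) * δ + δ := by ring
    have := hFstep ((k : ℝ) * δ)
    rw [hh]
    simp only []
    rw [e]
    exact this
  have hex : ∃ k, k < M ∧ h (k + 1) - h k < δ := by
    by_contra hcon
    push_neg at hcon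
    have hsum : ∑ k ∈ Finset.range M, (h (k + 1) - h k) = h M - h 0 :=
      Finset.sum_range_sub h M
    have hlow : (M : ℝ) * δ ≤ ∑ k ∈ Finset.range M, (h (k + 1) - h k) := by
      have := Finset.card_nsmul_le_sum (Finset.range M) (fun k => h (k + 1) - h k) δ
        (fun k hk => hcon k (Finset.mem_range.mp hk))
      simpa [nsmul_eq_mul] using this
    have hup : h M - h 0 ≤ 2 * (δ * P) := by
      have h1 := abs_le.mp (hhbd M)
      have h2 := abs_le.mp (hhbd 0)
      linarith [h1.2, h2.1]
    have hMP : 2 * P < (M : ℝ) := by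
      have := Nat.lt_floor_add_one (2 * P)
      rw [hM]
      push_cast
      linarith
    nlinarith
  obtain ⟨k, hkM, hkey⟩ := hex
  refine ⟨x₀ + (((k : ℝ) + 1) * δ) • w, ?_, ?_⟩
  · -- membership in U
    apply hball
    rw [Metric.mem_ball, Real.dist_eq, sub_zero, abs_of_pos (by positivity)]
    have hk1 : ((k : ℝ) + 1) ≤ (M : ℝ) := by exact_mod_cast Nat.succ_le_of_lt hkM
    have h2 : ((k : ℝ) + 1) * δ ≤ (M : ℝ) * δ := mul_le_mul_of_nonneg_right hk1 hδpos.le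
    have hMδ : (M : ℝ) * δ < σ := by
      have hM1' : (0 : ℝ) < 2 * ((M : ℝ) + 1) := by positivity
      rw [mul_div_assoc', div_lt_iff₀ hM1']
      nlinarith [Nat.cast_nonneg (α := ℝ) M]
    linarith
  · -- membership in the flat set
    refine ⟨δ, hδpos, ?_⟩
    have e1 : x₀ + (((k : ℝ) + 1) * δ) • w + δ • w = x₀ + ((((k : ℝ) + 1) + 1) * δ) • w := by
      module
    have e2 : x₀ + (((k : ℝ) + 1) * δ) • w - δ • w = x₀ + ((k : ℝ) * δ) • w := by
      module
    rw [e1, e2]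
    have hkey' : p (x₀ + ((((k : ℝ) + 1) + 1) * δ) • w) + p (x₀ + ((k : ℝ) * δ) • w)
        - 2 * p (x₀ + (((k : ℝ) + 1) * δ) • w) < δ := by
      have h2 := hkey
      rw [hh] at h2
      simp only [] at h2
      push_cast at h2
      linarith
    exact hkey'

end Aux

/-- There is no separable Fréchet space of universal disposition for finite-dimensional graded
Fréchet spaces: for every separable Fréchet space `E` with an increasing separating sequence of
seminorms there exist finite-dimensional graded Fréchet spaces `X ⊆ Y` and an isometric
embedding `f₀ : X → E` which extends to no isometric embedding `f : Y → E`. -/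
theorem no_separable_frechet_of_universal_disposition
    (E : Type*) [AddCommGroup E] [Module ℝ E] [UniformSpace E] [IsUniformAddGroup E]
    [CompleteSpace E] [TopologicalSpace.SeparableSpace E]
    (pE : ℕ → Seminorm ℝ E) (hEmono : Monotone pE)
    (hEsep : ∀ x : E, (∀ i : ℕ, pE i x = 0) → x = 0)
    (hEws : WithSeminorms (𝕜 := ℝ) (E := E) pE) :
    ∃ (Y : FinGradedFrechet) (X : Submodule ℝ Y.carrier) (f₀ : X →ₗ[ℝ] E),
      (∀ (i : ℕ) (x : X), pE i (f₀ x) = Y.seminorms i (x : Y.carrier)) ∧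
      ¬ ∃ f : Y.carrier →ₗ[ℝ] E,
          (∀ x : X, f (x : Y.carrier) = f₀ x) ∧
          ∀ (i : ℕ) (y : Y.carrier), pE i (f y) = Y.seminorms i y := by
  classical
  have hcont : ∀ i, Continuous (pE i) := fun i => hEws.continuous_seminorm i
  by_cases hE : ∀ x : E, x = 0
  · -- trivial space E
    set q : ℕ → Seminorm ℝ (ℝ × ℝ) := fun _ =>
      (normSeminorm ℝ ℝ).comp (LinearMap.fst ℝ ℝ ℝ)
        + (normSeminorm ℝ ℝ).comp (LinearMap.snd ℝ ℝ ℝ) with hq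
    have hq_apply : ∀ (i : ℕ) (x : ℝ × ℝ), q i x = |x.1| + |x.2| := by
      intro i x
      simp [hq, Seminorm.add_apply, Seminorm.comp_apply, Real.norm_eq_abs]
    have hqsep : ∀ x : ℝ × ℝ, (∀ i, q i x = 0) → x = 0 := by
      intro x hx
      have h0 : |x.1| + |x.2| = 0 := by rw [← hq_apply 0 x]; exact hx 0
      have h1 := abs_nonneg x.1
      have h2 := abs_nonneg x.2
      have hx1 : x.1 = 0 := abs_eq_zero.mp (by linarith)
      have hx2 : x.2 = 0 := abs_eq_zero.mp (by linarith)
      rw [Prod.ext_iff]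
      exact ⟨by simpa using hx1, by simpa using hx2⟩
    refine ⟨⟨ℝ × ℝ, q, monotone_const, hqsep⟩, ⊥, 0, ?_, ?_⟩
    · intro i x
      have hx : (x : ℝ × ℝ) = 0 := by
        simpa using (Submodule.mem_bot (R := ℝ)).mp x.2
      show pE i ((0 : _ →ₗ[ℝ] E) x) = q i (x : ℝ × ℝ)
      rw [hx]
      simp [hq_apply]
    · rintro ⟨f, -, hiso⟩
      have h1 : pE 0 (f (0, 1)) = q 0 (0, 1) := hiso 0 (0, 1)
      rw [hE (f (0, 1)), hq_apply 0 (0,1)] at h1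
      simp at h1
  · -- nontrivial E : Baire category argument
    push_neg at hE
    obtain ⟨u₀, hu₀⟩ := hE
    haveI : Nonempty E := ⟨0⟩
    haveI : FirstCountableTopology E := hEws.firstCountableTopology
    haveI : Filter.IsCountablyGenerated (uniformity E) :=
      IsUniformAddGroup.uniformity_countably_generated
    haveI : BaireSpace E := by
      letI := UniformSpace.pseudoMetricSpace E
      infer_instance
    haveI : ContinuousSMul ℝ E := hEws.continuousSMul
    obtain ⟨z, hz⟩ := TopologicalSpace.exists_dense_seq E
    set A : ℕ → Set E := fun n =>
      {x : E | ∃ t : ℝ, 0 < t ∧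
        pE 0 (x + t • z n) + pE 0 (x - t • z n) - 2 * pE 0 x < t} with hA
    have hAopen : ∀ n, IsOpen (A n) := by
      intro n
      have : A n = ⋃ (t : ℝ) (_ : 0 < t),
          {x : E | pE 0 (x + t • z n) + pE 0 (x - t • z n) - 2 * pE 0 x < t} := by
        ext x
        simp [hA, Set.mem_iUnion]
      rw [this]
      refine isOpen_iUnion fun t => isOpen_iUnion fun ht => ?_
      apply isOpen_lt _ continuous_const
      have h1 : Continuous fun x : E => pE 0 (x + t • z n) :=
        (hcont 0).comp (continuous_id.add continuous_const)
      have h2 : Continuous fun x : E => pE 0 (x - t • z n) :=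
        (hcont 0).comp (continuous_id.sub continuous_const)
      exact (h1.add h2).sub (continuous_const.mul (hcont 0))
    have hAdense : ∀ n, Dense (A n) := fun n => aux_dense_flat (pE 0) (hcont 0) (z n)
    have hdense : Dense (⋂ n, A n) := dense_iInter_of_isOpen hAopen hAdense
    have hex : ∃ i, pE i u₀ ≠ 0 := by
      by_contra hcon
      push_neg at hcon
      exact hu₀ (hEsep u₀ hcon)
    obtain ⟨i₀, hi₀⟩ := hex
    have hi₀pos : 0 < pE i₀ u₀ := lt_of_le_of_ne (apply_nonneg _ _) (Ne.symm hi₀)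
    have hVopen : IsOpen {x : E | pE i₀ (x - u₀) < pE i₀ u₀} :=
      isOpen_lt ((hcont i₀).comp (continuous_id.sub continuous_const)) continuous_const
    obtain ⟨u, huA, huV⟩ := hdense.exists_mem_open hVopen ⟨u₀, by simpa using hi₀pos⟩
    have hu : u ≠ 0 := by
      intro h
      rw [h] at huV
      simp only [Set.mem_setOf_eq, zero_sub, map_neg_eq_map] at huV
      exact lt_irrefl _ huV
    have hexu : ∃ j, pE j u ≠ 0 := by
      by_contra hcon
      push_neg at hcon
      exact hu (hEsep u hcon)
    obtain ⟨j₀, hj₀⟩ := hexu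
    -- the graded space Y = ℝ² with q_i (a,b) = pE i u * |a| + |b|
    set q : ℕ → Seminorm ℝ (ℝ × ℝ) := fun i =>
      (pE i u).toNNReal • (normSeminorm ℝ ℝ).comp (LinearMap.fst ℝ ℝ ℝ)
        + (normSeminorm ℝ ℝ).comp (LinearMap.snd ℝ ℝ ℝ) with hq
    have hq_apply : ∀ (i : ℕ) (x : ℝ × ℝ), q i x = pE i u * |x.1| + |x.2| := by
      intro i x
      simp only [hq, Seminorm.add_apply, Seminorm.smul_apply, Seminorm.comp_apply,
        coe_normSeminorm, LinearMap.fst_apply, LinearMap.snd_apply, Real.norm_eq_abs,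
        NNReal.smul_def, smul_eq_mul, Real.coe_toNNReal _ (apply_nonneg (pE i) u)]
    have hqmono : Monotone q := by
      intro i j hij
      intro x
      have hx : q i x ≤ q j x := by
        rw [hq_apply, hq_apply]
        have h1 : pE i u ≤ pE j u := hEmono hij u
        have h2 := abs_nonneg x.1
        nlinarith
      exact hx
    have hqsep : ∀ x : ℝ × ℝ, (∀ i, q i x = 0) → x = 0 := by
      intro x hx
      have h1 : pE j₀ u * |x.1| + |x.2| = 0 := by rw [← hq_apply j₀ x]; exact hx j₀
      have ha1 := abs_nonneg x.1
      have ha2 := abs_nonneg x.2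
      have hc := apply_nonneg (pE j₀) u
      have hcm : 0 ≤ pE j₀ u * |x.1| := mul_nonneg hc ha1
      have hb : |x.2| = 0 := by linarith
      have hcpos : 0 < pE j₀ u := lt_of_le_of_ne hc (Ne.symm hj₀)
      have ha : |x.1| = 0 := by
        by_contra hne
        have : 0 < |x.1| := lt_of_le_of_ne ha1 (Ne.symm hne)
        nlinarith
      rw [Prod.ext_iff]
      exact ⟨by simpa using abs_eq_zero.mp ha, by simpa using abs_eq_zero.mp hb⟩
    refine ⟨⟨ℝ × ℝ, q, hqmono, hqsep⟩,
      LinearMap.ker (LinearMap.snd ℝ ℝ ℝ),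
      (LinearMap.toSpanSingleton ℝ E u).comp
        ((LinearMap.fst ℝ ℝ ℝ).comp (LinearMap.ker (LinearMap.snd ℝ ℝ ℝ)).subtype),
      ?_, ?_⟩
    · -- f₀ is isometric
      intro i x
      have hx2 : (x : ℝ × ℝ).2 = 0 := LinearMap.mem_ker.mp x.2
      show pE i _ = q i (x : ℝ × ℝ)
      simp only [LinearMap.comp_apply, Submodule.subtype_apply, LinearMap.fst_apply,
        LinearMap.toSpanSingleton_apply]
      rw [map_smul_eq_mul, hq_apply, hx2]
      simp [Real.norm_eq_abs, mul_comm]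
    · -- no isometric extension
      rintro ⟨f, hext, hiso⟩
      set v : E := f (0, 1) with hv
      have hmem : ((1, 0) : ℝ × ℝ) ∈ LinearMap.ker (LinearMap.snd ℝ ℝ ℝ) := by
        simp [LinearMap.mem_ker]
      have hfu : f (1, 0) = u := by
        have h1 : f ((⟨(1, 0), hmem⟩ : LinearMap.ker (LinearMap.snd ℝ ℝ ℝ)) : ℝ × ℝ)
            = (LinearMap.toSpanSingleton ℝ E u).comp
              ((LinearMap.fst ℝ ℝ ℝ).comp (LinearMap.ker (LinearMap.snd ℝ ℝ ℝ)).subtype)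
              ⟨(1, 0), hmem⟩ := hext ⟨(1, 0), hmem⟩
        simp only [LinearMap.comp_apply, Submodule.subtype_apply, LinearMap.fst_apply,
          LinearMap.toSpanSingleton_apply, one_smul] at h1
        exact h1
      have hline : ∀ t : ℝ, pE 0 (u + t • v) = pE 0 u + |t| := by
        intro t
        have h1 : pE 0 (f (1, t)) = q 0 (1, t) := hiso 0 (1, t)
        rw [hq_apply] at h1
        have hdecomp : ((1, t) : ℝ × ℝ) = (1, 0) + t • (0, 1) := by
          simp [Prod.ext_iff]
        rw [hdecomp, map_add, map_smul, hfu, ← hv] at h1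
        simpa using h1
      have hWopen : IsOpen {x : E | pE 0 (x - v) < 1 / 4} :=
        isOpen_lt ((hcont 0).comp (continuous_id.sub continuous_const)) continuous_const
      obtain ⟨n, hn⟩ := hz.exists_mem_open hWopen ⟨v, by simp⟩
      have hnv : pE 0 (z n - v) < 1 / 4 := hn
      have huAn : u ∈ A n := Set.mem_iInter.mp huA n
      obtain ⟨t, ht, hlt⟩ := huAn
      have habs : |t| = t := abs_of_pos ht
      have hsmul : ∀ y : E, pE 0 (t • y) = t * pE 0 y := by
        intro y
        rw [map_smul_eq_mul, Real.norm_eq_abs, habs]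
      have hzv : pE 0 (v - z n) = pE 0 (z n - v) := by
        rw [← neg_sub, map_neg_eq_map]
      have hb1 : pE 0 u + t - t * (1 / 4) ≤ pE 0 (u + t • z n) := by
        have hdec : u + t • v = (u + t • z n) + t • (v - z n) := by module
        have h1 : pE 0 (u + t • v) ≤ pE 0 (u + t • z n) + pE 0 (t • (v - z n)) := by
          rw [hdec]; exact map_add_le_add _ _ _
        rw [hline t, habs, hsmul, hzv] at h1
        nlinarith
      have hb2 : pE 0 u + t - t * (1 / 4) ≤ pE 0 (u - t • z n) := by
        have hdec : u + (-t) • v = (u - t • z n) + t • (z n - v) := by module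
        have h1 : pE 0 (u + (-t) • v) ≤ pE 0 (u - t • z n) + pE 0 (t • (z n - v)) := by
          rw [hdec]; exact map_add_le_add _ _ _
        rw [hline (-t), abs_neg, habs, hsmul] at h1
        nlinarith
      have hpu : 0 ≤ pE 0 u := apply_nonneg _ _
      nlinarith
end

section
/- Let G be a Banach space of almost universal disposition for finite-dimensional normed spaces and equip E = ∏_{n∈ℕ} G with the sequence of seminorms ‖x‖ₙ' = ‖x(n)‖_G (not necessarily increasing). Let X and Y be finite-dimensional real vector spaces with fixed separating sequences of seminorms (‖·‖ᵢ)_{i∈ℕ}, let ι : X → Y be an isometric embedding and f₀ : X → E an isometric embedding. Then for every ε > 0 there exists an ε-isometric embedding f : Y → E with f ∘ ι = f₀. -/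
/-- A type synonym for `Fin n → ℝ` carrying no norm instances, so we can put a custom norm. -/
def WrapAUD (n : ℕ) : Type := Fin n → ℝ

instance (n : ℕ) : AddCommGroup (WrapAUD n) := inferInstanceAs (AddCommGroup (Fin n → ℝ))
noncomputable instance (n : ℕ) : Module ℝ (WrapAUD n) := inferInstanceAs (Module ℝ (Fin n → ℝ))
instance (n : ℕ) : FiniteDimensional ℝ (WrapAUD n) :=
  inferInstanceAs (FiniteDimensional ℝ (Fin n → ℝ))

noncomputable def wrapAUDEquiv (n : ℕ) : (Fin n → ℝ) ≃ₗ[ℝ] WrapAUD n := LinearEquiv.refl ℝ (Fin n → ℝ)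

lemma aud_key (G : Type*) [NormedAddCommGroup G] [NormedSpace ℝ G]
    (X : Type*) [AddCommGroup X] [Module ℝ X]
    (Y : Type*) [AddCommGroup Y] [Module ℝ Y] [FiniteDimensional ℝ Y]
    (p : Seminorm ℝ Y) (q : Seminorm ℝ X)
    (ι : X →ₗ[ℝ] Y) (hι : ∀ x, p (ι x) = q x)
    (c : X →ₗ[ℝ] G) (hc : ∀ x, ‖c x‖ = q x)
    (ε : ℝ) (hε : 0 < ε)
    (hG : ∀ (F : Type) [NormedAddCommGroup F] [NormedSpace ℝ F] [FiniteDimensional ℝ F]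
        (E : Submodule ℝ F) (e : E →ₗ[ℝ] G), (∀ x : E, ‖e x‖ = ‖x‖) →
        ∃ f : F →ₗ[ℝ] G, (∀ x : E, f (x : F) = e x) ∧
          ∀ y : F, (1 + ε)⁻¹ * ‖y‖ ≤ ‖f y‖ ∧ ‖f y‖ ≤ (1 + ε) * ‖y‖) :
    ∃ φ : Y →ₗ[ℝ] G, (∀ x, φ (ι x) = c x) ∧
      ∀ y, (1 + ε)⁻¹ * p y ≤ ‖φ y‖ ∧ ‖φ y‖ ≤ (1 + ε) * p y := by
  classical
  -- kernel of the seminorm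
  let S : Submodule ℝ Y :=
    { carrier := {y | p y = 0}
      add_mem' := by
        intro a b ha hb
        simp only [Set.mem_setOf_eq] at *
        have h1 := map_add_le_add p a b
        have h2 := apply_nonneg p (a + b)
        linarith
      zero_mem' := map_zero p
      smul_mem' := by
        intro r y hy
        simp only [Set.mem_setOf_eq] at *
        rw [map_smul_eq_mul, hy, mul_zero] }
  obtain ⟨C, hC⟩ := Submodule.exists_isCompl S
  let π : Y →ₗ[ℝ] C := C.linearProjOfIsCompl S hC.symm
  have hπ : ∀ y : Y, p (π y : Y) = p y := by
    intro y
    have hdec : ((S.linearProjOfIsCompl C hC y : Y) + (π y : Y)) = y :=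
      Submodule.projection_add_projection_eq_self hC y
    have hS : p (S.linearProjOfIsCompl C hC y : Y) = 0 :=
      (S.linearProjOfIsCompl C hC y).2
    have h1 : p y ≤ p (π y : Y) := by
      calc p y = p ((S.linearProjOfIsCompl C hC y : Y) + (π y : Y)) := by rw [hdec]
        _ ≤ p (S.linearProjOfIsCompl C hC y : Y) + p (π y : Y) := map_add_le_add p _ _
        _ = p (π y : Y) := by rw [hS, zero_add]
    have h2 : p (π y : Y) ≤ p y := by
      have : (π y : Y) = y - (S.linearProjOfIsCompl C hC y : Y) :=
        eq_sub_of_add_eq' hdec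
      rw [this]
      calc p (y - _) ≤ p y + p (-(S.linearProjOfIsCompl C hC y : Y)) := by
            rw [sub_eq_add_neg]; exact map_add_le_add p _ _
        _ = p y := by rw [map_neg_eq_map, hS, add_zero]
    linarith
  set n := Module.finrank ℝ C with hn
  let ψ : C ≃ₗ[ℝ] WrapAUD n := (Module.finBasis ℝ C).equivFun.trans (wrapAUDEquiv n)
  -- custom norm on WrapAUD n
  let N : AddGroupNorm (WrapAUD n) :=
    { toFun := fun v => p (ψ.symm v : Y)
      map_zero' := by simp
      add_le' := by
        intro a b
        simp only [map_add, Submodule.coe_add]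
        exact map_add_le_add p _ _
      neg' := fun a => by
        show p _ = p _
        simp [map_neg_eq_map]
      eq_zero_of_map_eq_zero' := by
        intro v hv
        have hmem : (ψ.symm v : Y) ∈ S := hv
        have hmem' : (ψ.symm v : Y) ∈ S ⊓ C := ⟨hmem, (ψ.symm v).2⟩
        rw [hC.inf_eq_bot] at hmem'
        have : ψ.symm v = 0 := Subtype.ext hmem'
        have := congrArg ψ this
        simpa using this }
  letI : NormedAddCommGroup (WrapAUD n) := N.toNormedAddCommGroup
  have hnormdef : ∀ v : WrapAUD n, ‖v‖ = p (ψ.symm v : Y) := fun _ => rfl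
  letI : NormedSpace ℝ (WrapAUD n) := by
    refine ⟨fun r v => ?_⟩
    rw [hnormdef, hnormdef, map_smul]
    simp only [Submodule.coe_smul]
    rw [map_smul_eq_mul]
  let g : X →ₗ[ℝ] WrapAUD n := ψ.toLinearMap ∘ₗ π ∘ₗ ι
  let g' : Y →ₗ[ℝ] WrapAUD n := ψ.toLinearMap ∘ₗ π
  have hg' : ∀ y : Y, ‖g' y‖ = p y := by
    intro y
    rw [hnormdef]
    simp only [g', LinearMap.coe_comp, LinearEquiv.coe_coe, Function.comp_apply,
      LinearEquiv.symm_apply_apply]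
    exact hπ y
  have hker : LinearMap.ker g ≤ LinearMap.ker c := by
    intro x hx
    simp only [LinearMap.mem_ker, g, LinearMap.coe_comp, LinearEquiv.coe_coe,
      Function.comp_apply] at hx
    have hπ0 : π (ι x) = 0 := by
      have := congrArg ψ.symm hx
      simpa using this
    have hp0 : p (ι x) = 0 := by
      rw [← hπ (ι x), hπ0]
      simp
    have : q x = 0 := by rw [← hι x]; exact hp0
    have : ‖c x‖ = 0 := by rw [hc x, this]
    simpa [LinearMap.mem_ker] using norm_eq_zero.mp this
  let E := LinearMap.range g
  let e : E →ₗ[ℝ] G :=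
    (Submodule.liftQ (LinearMap.ker g) c hker) ∘ₗ (g.quotKerEquivRange).symm.toLinearMap
  have he : ∀ x : X, e ⟨g x, LinearMap.mem_range_self g x⟩ = c x := by
    intro x
    simp only [e, LinearMap.coe_comp, LinearEquiv.coe_coe, Function.comp_apply]
    rw [LinearMap.quotKerEquivRange_symm_apply_image g x (LinearMap.mem_range_self g x)]
    simp [Submodule.liftQ_apply]
  have hiso : ∀ z : E, ‖e z‖ = ‖z‖ := by
    rintro ⟨z, hz⟩
    obtain ⟨x, rfl⟩ := hz
    rw [he x]
    have h1 : ‖c x‖ = q x := hc x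
    have h2 : ‖(⟨g x, LinearMap.mem_range_self g x⟩ : E)‖ = ‖g x‖ := rfl
    rw [h1, h2, hnormdef]
    simp only [g, LinearMap.coe_comp, LinearEquiv.coe_coe, Function.comp_apply,
      LinearEquiv.symm_apply_apply]
    rw [hπ (ι x), hι x]
  obtain ⟨h, hrestr, hbd⟩ := hG (WrapAUD n) E e hiso
  refine ⟨h ∘ₗ g', ?_, ?_⟩
  · intro x
    have h1 : g' (ι x) = g x := rfl
    simp only [LinearMap.coe_comp, Function.comp_apply, h1]
    rw [hrestr ⟨g x, LinearMap.mem_range_self g x⟩, he x]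
  · intro y
    have := hbd (g' y)
    rw [hg' y] at this
    simpa using this

/-- Let `G` be a Banach space of almost universal disposition for finite-dimensional normed
spaces and equip `E = ∏_{n ∈ ℕ} G` with the seminorms `‖x‖ₙ' = ‖x n‖` (not necessarily
increasing).  Let `X` and `Y` be finite-dimensional real vector spaces with fixed separating
sequences of seminorms, `ι : X → Y` an isometric embedding and `f₀ : X → E` an isometric
embedding.  Then for every `ε > 0` there is an `ε`-isometric embedding `f : Y → E` with
`f ∘ ι = f₀`. -/
theorem product_almost_universal_disposition_unordered
    (G : Type*) [NormedAddCommGroup G] [NormedSpace ℝ G] [CompleteSpace G]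
    -- `G` is of almost universal disposition for finite-dimensional normed spaces:
    (hG : ∀ ε : ℝ, 0 < ε →
      ∀ (F : Type) [NormedAddCommGroup F] [NormedSpace ℝ F] [FiniteDimensional ℝ F]
        (E : Submodule ℝ F) (e : E →ₗ[ℝ] G), (∀ x : E, ‖e x‖ = ‖x‖) →
        ∃ f : F →ₗ[ℝ] G, (∀ x : E, f (x : F) = e x) ∧
          ∀ y : F, (1 + ε)⁻¹ * ‖y‖ ≤ ‖f y‖ ∧ ‖f y‖ ≤ (1 + ε) * ‖y‖)
    (X : Type*) [AddCommGroup X] [Module ℝ X] [FiniteDimensional ℝ X]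
    (pX : ℕ → Seminorm ℝ X) (hXsep : ∀ x : X, (∀ i : ℕ, pX i x = 0) → x = 0)
    (Y : Type*) [AddCommGroup Y] [Module ℝ Y] [FiniteDimensional ℝ Y]
    (pY : ℕ → Seminorm ℝ Y) (hYsep : ∀ y : Y, (∀ i : ℕ, pY i y = 0) → y = 0)
    (ι : X →ₗ[ℝ] Y) (hι : ∀ (i : ℕ) (x : X), pY i (ι x) = pX i x)
    (f₀ : X →ₗ[ℝ] (ℕ → G)) (hf₀ : ∀ (i : ℕ) (x : X), ‖f₀ x i‖ = pX i x)
    (ε : ℝ) (hε : 0 < ε) :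
    ∃ f : Y →ₗ[ℝ] (ℕ → G),
      Function.Injective f ∧
      (∀ x : X, f (ι x) = f₀ x) ∧
      ∀ (i : ℕ) (y : Y), (1 + ε)⁻¹ * pY i y ≤ ‖f y i‖ ∧ ‖f y i‖ ≤ (1 + ε) * pY i y := by
  have key : ∀ i : ℕ, ∃ φ : Y →ₗ[ℝ] G, (∀ x, φ (ι x) = f₀ x i) ∧
      ∀ y, (1 + ε)⁻¹ * pY i y ≤ ‖φ y‖ ∧ ‖φ y‖ ≤ (1 + ε) * pY i y := by
    intro i
    exact aud_key G X Y (pY i) (pX i) ι (hι i) ((LinearMap.proj i).comp f₀)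
      (fun x => hf₀ i x) ε hε (hG ε hε)
  choose φ hφι hφbd using key
  refine ⟨LinearMap.pi φ, ?_, ?_, ?_⟩
  · rw [← LinearMap.ker_eq_bot, LinearMap.ker_eq_bot']
    intro y hy
    apply hYsep
    intro i
    have h0 : φ i y = 0 := congrFun hy i
    have := (hφbd i y).1
    rw [h0, norm_zero] at this
    have hpos : (0:ℝ) < (1 + ε)⁻¹ := by positivity
    nlinarith [apply_nonneg (pY i) y]
  · intro x
    funext i
    exact hφι i x
  · intro i y
    exact hφbd i y
end
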